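/- arXiv:2101.03627 — 9 statements merged into one kernel-verified Lean document; each statement's English description precedes it below -/
import Mathlib

section
/- Let b > 0 and let t*(b) be the unique t > max_{k∈K} c_k with ∑_{k∈K} α_k/(t − c_k) = b. Then for every allocation (b_k)_{k∈K} with b_k > 0 for all k and ∑_{k∈K} b_k = b, one has max_{k∈K} (c_k + α_k/b_k) ≥ t*(b), with equality if and only if b_k = α_k/(t*(b) − c_k) for every k. In particular the allocation b_k = α_k/(t*(b) − c_k) minimizes the round length max_k (c_k + α_k/b_k) subject to ∑_k b_k = b. -/
/-- Optimality of the water-filling intra-service bandwidth allocation: any feasible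
allocation has round length `max_k (c_k + α_k / b_k) ≥ t*(b)`, with equality iff
`b_k = α_k / (t*(b) − c_k)` for every `k`. -/
theorem stmt_1 {ι : Type*} [Fintype ι] [Nonempty ι] (α c : ι → ℝ)
    (hα : ∀ k, 0 < α k) (hc : ∀ k, 0 < c k)
    (b : ℝ) (hb : 0 < b) (tstar : ℝ)
    (htgt : Finset.univ.sup' Finset.univ_nonempty c < tstar)
    (hteq : ∑ k, α k / (tstar - c k) = b)
    (bk : ι → ℝ) (hbk : ∀ k, 0 < bk k) (hsum : ∑ k, bk k = b) :
    tstar ≤ Finset.univ.sup' Finset.univ_nonempty (fun k => c k + α k / bk k) ∧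
    (Finset.univ.sup' Finset.univ_nonempty (fun k => c k + α k / bk k) = tstar ↔
      ∀ k, bk k = α k / (tstar - c k)) := by
  have hpos : ∀ k, 0 < tstar - c k := fun k =>
    sub_pos.2 (lt_of_le_of_lt (Finset.le_sup' c (Finset.mem_univ k)) htgt)
  have hmain : tstar ≤ Finset.univ.sup' Finset.univ_nonempty (fun k => c k + α k / bk k) := by
    by_contra h
    push_neg at h
    rw [Finset.sup'_lt_iff] at h
    have hlt : ∀ k, α k / (tstar - c k) < bk k := by
      intro k
      have hk := h k (Finset.mem_univ k)
      have : α k / bk k < tstar - c k := by linarith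
      rw [div_lt_iff₀ (hbk k)] at this
      rw [div_lt_iff₀ (hpos k)]
      linarith [this]
    have := Finset.sum_lt_sum_of_nonempty Finset.univ_nonempty
      (fun k _ => hlt k)
    rw [hteq, hsum] at this
    exact lt_irrefl b this
  refine ⟨hmain, ?_, ?_⟩
  · intro heq
    have hle : ∀ k, α k / (tstar - c k) ≤ bk k := by
      intro k
      have hk : c k + α k / bk k ≤ tstar := by
        rw [← heq]; exact Finset.le_sup' (fun k => c k + α k / bk k) (Finset.mem_univ k)
      have : α k / bk k ≤ tstar - c k := by linarith
      rw [div_le_iff₀ (hbk k)] at this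
      rw [div_le_iff₀ (hpos k)]
      linarith [this]
    have hsums : ∑ k, α k / (tstar - c k) = ∑ k, bk k := by rw [hteq, hsum]
    have := (Finset.sum_eq_sum_iff_of_le (fun k _ => hle k)).1 hsums
    intro k
    exact (this k (Finset.mem_univ k)).symm
  · intro hbeq
    have : ∀ k, c k + α k / bk k = tstar := by
      intro k
      rw [hbeq k]
      have h1 := hα k; have h2 := hpos k
      field_simp
      ring
    calc Finset.univ.sup' Finset.univ_nonempty (fun k => c k + α k / bk k)
        = Finset.univ.sup' Finset.univ_nonempty (fun _ => tstar) := by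
          congr 1; funext k; exact this k
      _ = tstar := Finset.sup'_const _ _
end

section
/- The inverse f* of b is strictly concave on [0, ∞). -/
private lemma term_convex (α c u v a b : ℝ) (hα : 0 < α) (hc : 0 < c)
    (hp : 0 < 1 - c * u) (hq : 0 < 1 - c * v) (hne : u ≠ v)
    (ha : 0 < a) (hb : 0 < b) (hab : a + b = 1) :
    α * (a * u + b * v) / (1 - c * (a * u + b * v))
      < a * (α * u / (1 - c * u)) + b * (α * v / (1 - c * v)) := by
  have hr : 0 < 1 - c * (a * u + b * v) := by nlinarith
  have hsq : 0 < (u - v) ^ 2 := by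
    have : u - v ≠ 0 := sub_ne_zero.mpr hne
    positivity
  have hkey : 0 < a * b * (α * c * (u - v) ^ 2) := by positivity
  have hb' : b = 1 - a := by linarith
  subst hb'
  rw [mul_div_assoc', mul_div_assoc', div_add_div _ _ (ne_of_gt hp) (ne_of_gt hq),
    div_lt_div_iff₀ hr (by positivity)]
  nlinarith [hkey, mul_pos hp hq, mul_pos (mul_pos hp hq) hr, mul_pos ha hb]

/-- The inverse `f*` of `b` is strictly concave on `[0, ∞)`. -/
theorem stmt_7 {ι : Type*} [Fintype ι] [Nonempty ι] (α c : ι → ℝ)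
    (hα : ∀ k, 0 < α k) (hc : ∀ k, 0 < c k)
    (fstar : ℝ → ℝ)
    (hrange : ∀ x : ℝ, 0 ≤ x →
      fstar x ∈ Set.Ico (0 : ℝ) (1 / Finset.univ.sup' Finset.univ_nonempty c))
    (hinv : ∀ x : ℝ, 0 ≤ x → ∑ k, α k * fstar x / (1 - c k * fstar x) = x) :
    StrictConcaveOn ℝ (Set.Ici 0) fstar := by
  set S := Finset.univ.sup' Finset.univ_nonempty c with hSdef
  have hS : 0 < S :=
    lt_of_lt_of_le (hc (Classical.arbitrary ι)) (Finset.le_sup' c (Finset.mem_univ _))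
  have hden : ∀ f : ℝ, 0 ≤ f → f < 1 / S → ∀ k, 0 < 1 - c k * f := by
    intro f hf hfM k
    have h1 : c k * f ≤ S * f :=
      mul_le_mul_of_nonneg_right (Finset.le_sup' c (Finset.mem_univ k)) hf
    have h2 : S * f < S * (1 / S) := mul_lt_mul_of_pos_left hfM hS
    have h3 : S * (1 / S) = 1 := by field_simp
    linarith
  -- strict monotonicity of b on [0, 1/S)
  have hmono : ∀ u v : ℝ, 0 ≤ u → u < v → v < 1 / S →
      (∑ k, α k * u / (1 - c k * u)) < ∑ k, α k * v / (1 - c k * v) := by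
    intro u v hu huv hvM
    apply Finset.sum_lt_sum_of_nonempty Finset.univ_nonempty
    intro k _
    have hpu := hden u hu (lt_trans huv hvM) k
    have hpv := hden v (le_trans hu huv.le) hvM k
    rw [div_lt_div_iff₀ hpu hpv]
    nlinarith [mul_lt_mul_of_pos_left huv (hα k)]
  constructor
  · exact convex_Ici 0
  intro x hx y hy hxy a b ha hb hab
  simp only [smul_eq_mul] at *
  have hx' : (0:ℝ) ≤ x := hx
  have hy' : (0:ℝ) ≤ y := hy
  have hz' : (0:ℝ) ≤ a * x + b * y := by positivity
  obtain ⟨hfx0, hfxM⟩ := hrange x hx'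
  obtain ⟨hfy0, hfyM⟩ := hrange y hy'
  obtain ⟨hfz0, hfzM⟩ := hrange _ hz'
  have hne : fstar x ≠ fstar y := by
    intro h
    apply hxy
    rw [← hinv x hx', ← hinv y hy', h]
  have hcombo0 : 0 ≤ a * fstar x + b * fstar y := by positivity
  have hcomboM : a * fstar x + b * fstar y < 1 / S := by nlinarith
  -- b (a fx + b fy) < a x + b y = b (fz)
  have hlt : (∑ k, α k * (a * fstar x + b * fstar y) / (1 - c k * (a * fstar x + b * fstar y)))
      < a * x + b * y := by
    have := hinv x hx'
    have := hinv y hy'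
    calc (∑ k, α k * (a * fstar x + b * fstar y) / (1 - c k * (a * fstar x + b * fstar y)))
        < ∑ k, (a * (α k * fstar x / (1 - c k * fstar x))
            + b * (α k * fstar y / (1 - c k * fstar y))) := by
          apply Finset.sum_lt_sum_of_nonempty Finset.univ_nonempty
          intro k _
          exact term_convex (α k) (c k) _ _ a b (hα k) (hc k)
            (hden _ hfx0 hfxM k) (hden _ hfy0 hfyM k) hne ha hb hab
      _ = a * x + b * y := by
          rw [Finset.sum_add_distrib, ← Finset.mul_sum, ← Finset.mul_sum,
            hinv x hx', hinv y hy']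
  have hbz : (∑ k, α k * fstar (a * x + b * y) / (1 - c k * fstar (a * x + b * y)))
      = a * x + b * y := hinv _ hz'
  by_contra hcon
  push_neg at hcon
  rcases eq_or_lt_of_le hcon with h | h
  · rw [← h] at hlt
    rw [hbz] at hlt
    exact lt_irrefl _ hlt
  · have := hmono _ _ hfz0 h hcomboM
    rw [hbz] at this
    linarith
end

section
/- (Proposition 1) The function x ↦ log(1 + f*(x)) is concave on [0, ∞); consequently, for FL services n = 1, …, N each with its own index set K_n and coefficients α_{n,k} > 0, c_{n,k} > 0 and corresponding inverse functions f*_n, the inter-service bandwidth allocation problem of maximizing ∑_{n=1}^N log(1 + f*_n(b_n)) over (b_1, …, b_N) with b_n ≥ 0 and ∑_{n=1}^N b_n = B is the maximization of a concave function over a convex set. -/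
open Finset

/-- Auxiliary: the core single-service concavity result. -/
lemma aux_log_fstar_concave {κ : Type*} [Fintype κ] [Nonempty κ]
    (α c : κ → ℝ) (hα : ∀ k, 0 < α k) (hc : ∀ k, 0 < c k)
    (f : ℝ → ℝ)
    (hrange : ∀ x : ℝ, 0 ≤ x →
      f x ∈ Set.Ico (0 : ℝ) (1 / Finset.univ.sup' Finset.univ_nonempty c))
    (hinv : ∀ x : ℝ, 0 ≤ x → ∑ k, α k * f x / (1 - c k * f x) = x) :
    ConcaveOn ℝ (Set.Ici 0) (fun x => Real.log (1 + f x)) := by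
  set M : ℝ := Finset.univ.sup' Finset.univ_nonempty c with hMdef
  have hM : 0 < M :=
    lt_of_lt_of_le (hc (Classical.arbitrary κ)) (Finset.le_sup' c (Finset.mem_univ _))
  have hcM : ∀ k, c k ≤ M := fun k => Finset.le_sup' c (Finset.mem_univ k)
  have hden : ∀ (k : κ) (u : ℝ), u ∈ Set.Ico (0 : ℝ) (1 / M) → 0 < 1 - c k * u := by
    rintro k u ⟨hu0, hu1⟩
    have h1 : c k * u ≤ M * u := mul_le_mul_of_nonneg_right (hcM k) hu0
    have h2 : u * M < 1 := (lt_div_iff₀ hM).mp hu1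
    nlinarith
  set bfun : ℝ → ℝ := fun u => ∑ k, α k * u / (1 - c k * u) with hbfun
  -- strict monotonicity of bfun on the interval
  have hbmono : ∀ u v, u ∈ Set.Ico (0 : ℝ) (1 / M) → v ∈ Set.Ico (0 : ℝ) (1 / M) →
      u < v → bfun u < bfun v := by
    intro u v hu hv huv
    apply Finset.sum_lt_sum_of_nonempty Finset.univ_nonempty
    intro k _
    rw [div_lt_div_iff₀ (hden k u hu) (hden k v hv)]
    nlinarith [mul_pos (hα k) (sub_pos.mpr huv), mul_pos (hα k) (hc k), hu.1, hv.1]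
  -- convexity inequality for bfun on the interval
  have hbconv : ∀ u v t s, u ∈ Set.Ico (0 : ℝ) (1 / M) → v ∈ Set.Ico (0 : ℝ) (1 / M) →
      0 ≤ t → 0 ≤ s → t + s = 1 →
      bfun (t * u + s * v) ≤ t * bfun u + s * bfun v := by
    intro u v t s hu hv ht hs hts
    have hsub : s = 1 - t := by linarith
    subst hsub
    have hw : t * u + (1 - t) * v ∈ Set.Ico (0 : ℝ) (1 / M) := by
      have := (convex_Ico (0 : ℝ) (1 / M)) hu hv ht hs hts
      simpa [smul_eq_mul] using this
    simp only [hbfun, Finset.mul_sum, ← Finset.sum_add_distrib]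
    apply Finset.sum_le_sum
    intro k _
    have hA := hden k u hu
    have hB := hden k v hv
    have hC := hden k _ hw
    have hrhs : t * (α k * u / (1 - c k * u)) + (1 - t) * (α k * v / (1 - c k * v)) =
        (t * (α k * u) * (1 - c k * v) + (1 - t) * (α k * v) * (1 - c k * u)) /
          ((1 - c k * u) * (1 - c k * v)) := by
      rw [mul_div_assoc', mul_div_assoc', div_add_div _ _ hA.ne' hB.ne']; ring
    rw [hrhs, div_le_div_iff₀ hC (mul_pos hA hB)]
    nlinarith [mul_nonneg (mul_nonneg (mul_nonneg (hα k).le (mul_nonneg ht hs))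
      (hc k).le) (sq_nonneg (u - v))]
  -- concavity of f on [0,∞)
  have hfconc : ∀ x y t s, 0 ≤ x → 0 ≤ y → 0 ≤ t → 0 ≤ s → t + s = 1 →
      t * f x + s * f y ≤ f (t * x + s * y) := by
    intro x y t s hx hy ht hs hts
    by_contra h
    push_neg at h
    have hz : (0:ℝ) ≤ t * x + s * y := add_nonneg (mul_nonneg ht hx) (mul_nonneg hs hy)
    have hu := hrange x hx
    have hv := hrange y hy
    have hwm := hrange _ hz
    have hcomb : t * f x + s * f y ∈ Set.Ico (0 : ℝ) (1 / M) := by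
      have := (convex_Ico (0 : ℝ) (1 / M)) hu hv ht hs hts
      simpa [smul_eq_mul] using this
    have h1 : bfun (f (t * x + s * y)) < bfun (t * f x + s * f y) :=
      hbmono _ _ hwm hcomb h
    have h2 : bfun (t * f x + s * f y) ≤ t * bfun (f x) + s * bfun (f y) :=
      hbconv _ _ _ _ hu hv ht hs hts
    have e1 : bfun (f x) = x := hinv x hx
    have e2 : bfun (f y) = y := hinv y hy
    have e3 : bfun (f (t * x + s * y)) = t * x + s * y := hinv _ hz
    rw [e1, e2] at h2
    rw [e3] at h1
    linarith
  refine ⟨convex_Ici 0, ?_⟩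
  intro x hx y hy t s ht hs hts
  simp only [smul_eq_mul]
  have hx0 : (0:ℝ) ≤ x := hx
  have hy0 : (0:ℝ) ≤ y := hy
  have hfx := (hrange x hx0).1
  have hfy := (hrange y hy0).1
  have h1 : t * f x + s * f y ≤ f (t * x + s * y) := hfconc x y t s hx0 hy0 ht hs hts
  have hp1 : (0:ℝ) < 1 + f x := by linarith
  have hp2 : (0:ℝ) < 1 + f y := by linarith
  have hlogc := strictConcaveOn_log_Ioi.concaveOn.2 (Set.mem_Ioi.mpr hp1)
    (Set.mem_Ioi.mpr hp2) ht hs hts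
  simp only [smul_eq_mul] at hlogc
  calc t * Real.log (1 + f x) + s * Real.log (1 + f y)
      ≤ Real.log (t * (1 + f x) + s * (1 + f y)) := hlogc
    _ = Real.log (1 + (t * f x + s * f y)) := by
        rw [show t * (1 + f x) + s * (1 + f y) = 1 + (t * f x + s * f y) by linear_combination hts]
    _ ≤ Real.log (1 + f (t * x + s * y)) := by
        apply Real.log_le_log
        · nlinarith [mul_nonneg ht hfx, mul_nonneg hs hfy]
        · linarith

/-- (Proposition 1) `x ↦ log(1 + f*_n(x))` is concave on `[0,∞)` for each service `n`;
consequently the inter-service bandwidth allocation problem maximizes a concave function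
over a convex set. -/
theorem stmt_8 {N : ℕ} (ι : Fin N → Type*) [∀ n, Fintype (ι n)] [∀ n, Nonempty (ι n)]
    (α c : ∀ n, ι n → ℝ)
    (hα : ∀ n k, 0 < α n k) (hc : ∀ n k, 0 < c n k)
    (fstar : Fin N → ℝ → ℝ)
    (hrange : ∀ n, ∀ x : ℝ, 0 ≤ x →
      fstar n x ∈ Set.Ico (0 : ℝ) (1 / Finset.univ.sup' Finset.univ_nonempty (c n)))
    (hinv : ∀ n, ∀ x : ℝ, 0 ≤ x →
      ∑ k, α n k * fstar n x / (1 - c n k * fstar n x) = x)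
    (B : ℝ) (hB : 0 < B) :
    (∀ n, ConcaveOn ℝ (Set.Ici 0) (fun x => Real.log (1 + fstar n x))) ∧
    Convex ℝ {b : Fin N → ℝ | (∀ n, 0 ≤ b n) ∧ ∑ n, b n = B} ∧
    ConcaveOn ℝ {b : Fin N → ℝ | (∀ n, 0 ≤ b n) ∧ ∑ n, b n = B}
      (fun b => ∑ n, Real.log (1 + fstar n (b n))) := by
  have hconc : ∀ n, ConcaveOn ℝ (Set.Ici 0) (fun x => Real.log (1 + fstar n x)) :=
    fun n => aux_log_fstar_concave (α n) (c n) (hα n) (hc n) (fstar n) (hrange n) (hinv n)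
  have hset : Convex ℝ {b : Fin N → ℝ | (∀ n, 0 ≤ b n) ∧ ∑ n, b n = B} := by
    rintro b ⟨hb1, hb2⟩ b' ⟨hb'1, hb'2⟩ t s ht hs hts
    constructor
    · intro n
      simp only [Pi.add_apply, Pi.smul_apply, smul_eq_mul]
      exact add_nonneg (mul_nonneg ht (hb1 n)) (mul_nonneg hs (hb'1 n))
    · simp only [Pi.add_apply, Pi.smul_apply, smul_eq_mul, Finset.sum_add_distrib,
        ← Finset.mul_sum, hb2, hb'2]
      nlinarith
  refine ⟨hconc, hset, hset, ?_⟩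
  rintro b ⟨hb1, hb2⟩ b' ⟨hb'1, hb'2⟩ t s ht hs hts
  simp only [smul_eq_mul, Pi.add_apply, Pi.smul_apply, Finset.mul_sum,
    ← Finset.sum_add_distrib]
  apply Finset.sum_le_sum
  intro n _
  have := (hconc n).2 (Set.mem_Ici.mpr (hb1 n)) (Set.mem_Ici.mpr (hb'1 n)) ht hs hts
  simpa [smul_eq_mul] using this
end

section
/- For every λ > 0, the function b ↦ log(1 + f*(b)) − λ·b has a unique maximizer on [0, ∞). -/
/-- For every `λ > 0`, the function `b ↦ log(1 + f*(b)) − λ·b` has a unique maximizer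
on `[0, ∞)`. -/
theorem stmt_9 {ι : Type*} [Fintype ι] [Nonempty ι] (α c : ι → ℝ)
    (hα : ∀ k, 0 < α k) (hc : ∀ k, 0 < c k)
    (fstar : ℝ → ℝ)
    (hrange : ∀ x : ℝ, 0 ≤ x →
      fstar x ∈ Set.Ico (0 : ℝ) (1 / Finset.univ.sup' Finset.univ_nonempty c))
    (hinv : ∀ x : ℝ, 0 ≤ x → ∑ k, α k * fstar x / (1 - c k * fstar x) = x)
    (lam : ℝ) (hlam : 0 < lam) :
    ∃! bstar : ℝ, 0 ≤ bstar ∧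
      ∀ b : ℝ, 0 ≤ b →
        Real.log (1 + fstar b) - lam * b ≤ Real.log (1 + fstar bstar) - lam * bstar := by
  classical
  set S : ℝ := Finset.univ.sup' Finset.univ_nonempty c with hSdef
  obtain ⟨k₀⟩ := ‹Nonempty ι›
  have hS : 0 < S := lt_of_lt_of_le (hc k₀) (Finset.le_sup' c (Finset.mem_univ k₀))
  set M : ℝ := 1 / S with hMdef
  have hM : 0 < M := by positivity
  set B : ℝ → ℝ := fun f => ∑ k, α k * f / (1 - c k * f) with hBdef
  have hden : ∀ (k : ι) (u : ℝ), 0 ≤ u → u < M → 0 < 1 - c k * u := by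
    intro k u hu huM
    have h1 : u * S < 1 := (lt_div_iff₀ hS).mp huM
    have h2 : c k ≤ S := Finset.le_sup' c (Finset.mem_univ k)
    nlinarith
  have hBf : ∀ x : ℝ, 0 ≤ x → B (fstar x) = x := fun x hx => hinv x hx
  -- strict monotonicity of B on [0, M)
  have hBmono : ∀ u v : ℝ, 0 ≤ u → u < v → v < M → B u < B v := by
    intro u v hu huv hvM
    apply Finset.sum_lt_sum_of_nonempty Finset.univ_nonempty
    intro k _
    have hd1 : 0 < 1 - c k * u := hden k u hu (lt_trans huv hvM)
    have hd2 : 0 < 1 - c k * v := hden k v (le_trans hu huv.le) hvM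
    rw [div_lt_div_iff₀ hd1 hd2]
    nlinarith [mul_pos (hα k) (sub_pos.mpr huv)]
  have hBnonneg : ∀ u : ℝ, 0 ≤ u → u < M → 0 ≤ B u := by
    intro u hu huM
    apply Finset.sum_nonneg
    intro k _
    exact div_nonneg (mul_nonneg (hα k).le hu) (hden k u hu huM).le
  -- fstar (B w) = w
  have hfid : ∀ w : ℝ, 0 ≤ w → w < M → fstar (B w) = w := by
    intro w hw hwM
    have hBw : 0 ≤ B w := hBnonneg w hw hwM
    have h1 : B (fstar (B w)) = B w := hBf _ hBw
    have h2 := hrange (B w) hBw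
    rcases lt_trichotomy (fstar (B w)) w with h | h | h
    · have := hBmono _ _ h2.1 h hwM; rw [h1] at this; exact absurd this (lt_irrefl _)
    · exact h
    · have := hBmono _ _ hw h h2.2; rw [h1] at this; exact absurd this (lt_irrefl _)
  -- strict monotonicity of fstar
  have hfmono : StrictMonoOn fstar (Set.Ici 0) := by
    intro x hx y hy hxy
    by_contra h
    push_neg at h
    have : B (fstar y) ≤ B (fstar x) := by
      rcases eq_or_lt_of_le h with heq | hlt
      · rw [heq]
      · exact (hBmono _ _ (hrange y hy).1 hlt (hrange x hx).2).le
    rw [hBf x hx, hBf y hy] at this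
    exact absurd hxy (not_lt.mpr this)
  -- continuity of fstar on [0, ∞)
  have hfcont : ∀ a : ℝ, 0 ≤ a → ContinuousWithinAt fstar (Set.Ici 0) a := by
    intro a ha
    have hfar : ∀ b > fstar a, ∃ c' ∈ Set.Ici (0:ℝ), fstar c' ∈ Set.Ioc (fstar a) b := by
      intro b hb
      have hfaM : fstar a < M := (hrange a ha).2
      have hfa0 : 0 ≤ fstar a := (hrange a ha).1
      set w : ℝ := (fstar a + min b M) / 2 with hwdef
      have hminw : fstar a < min b M := lt_min hb hfaM
      have hw1 : fstar a < w := by simp only [hwdef]; linarith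
      have hw2 : w < min b M := by simp only [hwdef]; linarith
      have hw0 : 0 ≤ w := le_trans hfa0 hw1.le
      have hwM : w < M := lt_of_lt_of_le hw2 (min_le_right _ _)
      refine ⟨B w, hBnonneg w hw0 hwM, ?_, ?_⟩
      · rw [hfid w hw0 hwM]; exact hw1
      · rw [hfid w hw0 hwM]; exact le_trans hw2.le (min_le_left _ _)
    rcases eq_or_lt_of_le ha with rfl | hapos
    · exact hfmono.continuousWithinAt_right_of_exists_between self_mem_nhdsWithin hfar
    · have hfal : ∀ b < fstar a, ∃ c' ∈ Set.Ici (0:ℝ), fstar c' ∈ Set.Ico b (fstar a) := by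
        intro b hb
        have hfaM : fstar a < M := (hrange a ha).2
        have hfa0 : 0 < fstar a :=
          lt_of_le_of_lt (hrange 0 le_rfl).1 (hfmono Set.self_mem_Ici ha hapos)
        set w : ℝ := max b (fstar a / 2) with hwdef
        have hw1 : w < fstar a := max_lt hb (by linarith)
        have hw0 : 0 ≤ w := le_trans (by linarith) (le_max_right b (fstar a / 2))
        have hwM : w < M := lt_trans hw1 hfaM
        refine ⟨B w, hBnonneg w hw0 hwM, ?_, ?_⟩
        · rw [hfid w hw0 hwM]; exact le_max_left _ _
        · rw [hfid w hw0 hwM]; exact hw1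
      exact ((hfmono.continuousAt_of_exists_between (Ici_mem_nhds hapos) hfal
        hfar)).continuousWithinAt
  -- midpoint strict convexity of B
  have hBmid : ∀ u v : ℝ, 0 ≤ u → u < M → 0 ≤ v → v < M → u ≠ v →
      B ((u + v) / 2) < (B u + B v) / 2 := by
    intro u v hu huM hv hvM huv
    have hmid : (B u + B v) / 2 = ∑ k, (α k * u / (1 - c k * u) + α k * v / (1 - c k * v)) / 2 := by
      rw [hBdef]
      simp only [← Finset.sum_add_distrib, ← Finset.sum_div]
    rw [hmid]
    apply Finset.sum_lt_sum_of_nonempty Finset.univ_nonempty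
    intro k _
    have hd1 : 0 < 1 - c k * u := hden k u hu huM
    have hd2 : 0 < 1 - c k * v := hden k v hv hvM
    have hdm : 0 < 1 - c k * ((u + v) / 2) := by nlinarith
    have hsq : 0 < (u - v) ^ 2 := by
      have h := sub_ne_zero.mpr huv
      positivity
    rw [div_add_div _ _ (ne_of_gt hd1) (ne_of_gt hd2), div_div,
      div_lt_div_iff₀ hdm (by positivity)]
    nlinarith [mul_pos (mul_pos (hα k) (hc k)) hsq]
  -- the objective function
  set g : ℝ → ℝ := fun b => Real.log (1 + fstar b) - lam * b with hgdef
  set B₀ : ℝ := Real.log (1 + M) / lam with hB₀def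
  have hlog1M : 0 < Real.log (1 + M) := Real.log_pos (by linarith)
  have hB₀0 : 0 ≤ B₀ := by positivity
  have hgcont : ContinuousOn g (Set.Icc 0 B₀) := by
    intro a ha
    have h1 : ContinuousWithinAt fstar (Set.Icc 0 B₀) a :=
      (hfcont a ha.1).mono (Set.Icc_subset_Ici_self)
    have h2 : ContinuousWithinAt (fun b => (1 : ℝ) + fstar b) (Set.Icc 0 B₀) a :=
      continuousWithinAt_const.add h1
    have hpos : (0:ℝ) < 1 + fstar a := by
      have := (hrange a ha.1).1; linarith
    have h3 : ContinuousWithinAt (fun b => Real.log (1 + fstar b)) (Set.Icc 0 B₀) a :=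
      h2.log (ne_of_gt hpos)
    exact h3.sub ((continuous_const.mul continuous_id).continuousWithinAt)
  obtain ⟨bs, hbsmem, hbsmax⟩ :=
    (isCompact_Icc : IsCompact (Set.Icc (0:ℝ) B₀)).exists_isMaxOn
      ⟨0, Set.left_mem_Icc.mpr hB₀0⟩ hgcont
  have hglobal : ∀ b : ℝ, 0 ≤ b → g b ≤ g bs := by
    intro b hb
    rcases le_or_gt b B₀ with hble | hbgt
    · exact hbsmax ⟨hb, hble⟩
    · have h0 : g 0 ≤ g bs := hbsmax (Set.left_mem_Icc.mpr hB₀0)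
      have hg0 : 0 ≤ g 0 := by
        have h1 : 0 ≤ Real.log (1 + fstar 0) :=
          Real.log_nonneg (by have := (hrange 0 le_rfl).1; linarith)
        simp only [hgdef]; simpa using h1
      have hfb : fstar b < M := (hrange b hb).2
      have hfb0 : 0 ≤ fstar b := (hrange b hb).1
      have hlog : Real.log (1 + fstar b) < Real.log (1 + M) :=
        Real.log_lt_log (by linarith) (by linarith)
      have hlamB : lam * B₀ = Real.log (1 + M) := by
        rw [hB₀def]; field_simp
      have : g b < 0 := by
        simp only [hgdef]
        have : lam * B₀ < lam * b := (mul_lt_mul_iff_right₀ hlam).mpr hbgt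
        rw [hlamB] at this
        linarith
      linarith
  refine ⟨bs, ⟨hbsmem.1, hglobal⟩, ?_⟩
  rintro y ⟨hy0, hymax⟩
  by_contra hne
  have hgeq : g y = g bs := le_antisymm (hglobal y hy0) (hymax bs hbsmem.1)
  set u : ℝ := fstar y with hudef
  set v : ℝ := fstar bs with hvdef
  have huv : u ≠ v := fun h => hne (hfmono.injOn hy0 hbsmem.1 h)
  have hu := hrange y hy0
  have hv := hrange bs hbsmem.1
  set w : ℝ := (u + v) / 2 with hwdef
  have hw0 : 0 ≤ w := by have := hu.1; have := hv.1; simp only [hwdef]; linarith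
  have hwM : w < M := by have := hu.2; have := hv.2; simp only [hwdef]; linarith
  set m : ℝ := (y + bs) / 2 with hmdef
  have hm0 : 0 ≤ m := by have := hbsmem.1; simp only [hmdef]; linarith
  have hBw : B w < m := by
    have h1 := hBmid u v hu.1 hu.2 hv.1 hv.2 huv
    rw [hBf y hy0, hBf bs hbsmem.1] at h1
    exact h1
  have hwlt : w < fstar m := by
    by_contra h
    push_neg at h
    have hm := hrange m hm0
    have : B (fstar m) ≤ B w := by
      rcases eq_or_lt_of_le h with heq | hlt
      · rw [heq]
      · exact (hBmono _ _ hm.1 hlt hwM).le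
    rw [hBf m hm0] at this
    linarith
  have hlog1 : Real.log (1 + w) < Real.log (1 + fstar m) :=
    Real.log_lt_log (by linarith) (by linarith)
  have hlog2 : (1/2 : ℝ) * Real.log (1 + u) + (1/2 : ℝ) * Real.log (1 + v) ≤
      Real.log (1 + w) := by
    have hcc := strictConcaveOn_log_Ioi.concaveOn.2
      (Set.mem_Ioi.mpr (by linarith [hu.1] : (0:ℝ) < 1 + u))
      (Set.mem_Ioi.mpr (by linarith [hv.1] : (0:ℝ) < 1 + v))
      (by norm_num : (0:ℝ) ≤ 1/2) (by norm_num : (0:ℝ) ≤ 1/2) (by norm_num)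
    simp only [smul_eq_mul] at hcc
    have harg : (1/2 : ℝ) * (1 + u) + (1/2 : ℝ) * (1 + v) = 1 + w := by
      simp only [hwdef]; ring
    rwa [harg] at hcc
  have hfinal : g bs < g m := by
    have h1 : g y + g bs = Real.log (1 + u) + Real.log (1 + v) - lam * (2 * m) := by
      simp only [hgdef, hudef, hvdef, hmdef]; ring
    have h2 : g m = Real.log (1 + fstar m) - lam * m := rfl
    rw [hgeq] at h1
    linarith
  exact absurd (hglobal m hm0) (not_le.mpr hfinal)
end

section
/- Let λ > 0 and let b* > 0 be a point at which b ↦ log(1 + f*(b)) − λ·b attains its maximum over [0, ∞). Then the frequency φ = f*(b*) satisfies (1 + φ)·∑_{k∈K} α_k/(1 − c_k φ)² = 1/λ; conversely, if φ ∈ [0, 1/max_k c_k) satisfies this equation and b* is the bandwidth with f*(b*) = φ, then b* maximizes log(1 + f*(b)) − λ·b over [0, ∞). -/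
lemma mylog (x y : ℝ) (hx : 0 < x) (hy : 0 < y) : Real.log y - Real.log x ≤ (y - x)/x := by
  have h1 := Real.log_le_sub_one_of_pos (div_pos hy hx)
  rw [Real.log_div hy.ne' hx.ne'] at h1
  have h2 : y/x - 1 = (y-x)/x := by field_simp
  linarith

lemma myconv (a c x y : ℝ) (ha : 0 < a) (hx : 0 < 1 - c*x) (hy : 0 < 1 - c*y) (hcc : 0 < c) :
    a*(y-x)/(1-c*x)^2 ≤ a*y/(1-c*y) - a*x/(1-c*x) := by
  have key : a*y/(1-c*y) - a*x/(1-c*x) - a*(y-x)/(1-c*x)^2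
      = a*c*(y-x)^2/((1-c*y)*(1-c*x)^2) := by
    have h1 := hx.ne'; have h2 := hy.ne'
    rw [div_sub_div _ _ h2 h1, div_sub_div _ _ (mul_ne_zero h2 h1) (pow_ne_zero 2 h1),
      div_eq_div_iff (mul_ne_zero (mul_ne_zero h2 h1) (pow_ne_zero 2 h1)) (mul_ne_zero h2 (pow_ne_zero 2 h1))]
    ring
  nlinarith [div_nonneg (by positivity : (0:ℝ) ≤ a*c*(y-x)^2)
    (by positivity : (0:ℝ) ≤ (1-c*y)*(1-c*x)^2)]

section main
variable {ι : Type*} [Fintype ι] [Nonempty ι] (α c : ι → ℝ)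

lemma denom_pos (hc : ∀ k, 0 < c k) {φ : ℝ}
    (hφ : φ ∈ Set.Ico (0 : ℝ) (1 / Finset.univ.sup' Finset.univ_nonempty c)) (k : ι) :
    0 < 1 - c k * φ := by
  obtain ⟨h0, h1⟩ := hφ
  set S := Finset.univ.sup' Finset.univ_nonempty c with hS
  have hSpos : 0 < S := lt_of_lt_of_le (hc (Classical.arbitrary ι))
    (Finset.le_sup' c (Finset.mem_univ _))
  have hck : c k ≤ S := Finset.le_sup' c (Finset.mem_univ k)
  have h3 : c k * φ ≤ S * φ := mul_le_mul_of_nonneg_right hck h0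
  have h2 : S * φ < 1 := by
    have := (lt_div_iff₀ hSpos).mp h1
    linarith
  linarith

omit [Nonempty ι] in
lemma keyIneq (hα : ∀ k, 0 < α k) (hc : ∀ k, 0 < c k) (lam : ℝ) (hlam : 0 < lam)
    (x y : ℝ) (hx1 : 0 ≤ x) (hy1 : 0 ≤ y)
    (hx : ∀ k, 0 < 1 - c k * x) (hy : ∀ k, 0 < 1 - c k * y) :
    (Real.log (1+y) - lam * ∑ k, α k * y / (1 - c k * y))
      - (Real.log (1+x) - lam * ∑ k, α k * x / (1 - c k * x))
    ≤ (y - x) * (1/(1+x) - lam * ∑ k, α k / (1 - c k * x)^2) := by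
  have hx0 : (0:ℝ) < 1 + x := by linarith
  have hy0 : (0:ℝ) < 1 + y := by linarith
  have h1 : Real.log (1+y) - Real.log (1+x) ≤ (y-x)/(1+x) := by
    have := mylog (1+x) (1+y) hx0 hy0
    simpa using this
  have h2 : (y-x) * ∑ k, α k / (1 - c k * x)^2
      ≤ (∑ k, α k * y / (1 - c k * y)) - ∑ k, α k * x / (1 - c k * x) := by
    rw [Finset.mul_sum, ← Finset.sum_sub_distrib]
    apply Finset.sum_le_sum
    intro k _
    have := myconv (α k) (c k) x y (hα k) (hx k) (hy k) (hc k)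
    calc (y-x) * (α k / (1 - c k * x)^2) = α k * (y-x)/(1 - c k * x)^2 := by ring
      _ ≤ _ := this
  have h3 := mul_le_mul_of_nonneg_left h2 hlam.le
  have e1 : (y-x) * (1/(1+x) - lam * ∑ k, α k / (1 - c k * x)^2)
      = (y-x)/(1+x) - lam * ((y-x) * ∑ k, α k / (1 - c k * x)^2) := by ring
  have e2 : lam * ((∑ k, α k * y / (1 - c k * y)) - ∑ k, α k * x / (1 - c k * x))
      = lam * (∑ k, α k * y / (1 - c k * y)) - lam * ∑ k, α k * x / (1 - c k * x) := by ring
  linarith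

omit [Nonempty ι] in
lemma b_nonneg (hα : ∀ k, 0 < α k) {φ : ℝ} (h0 : 0 ≤ φ) (hφ : ∀ k, 0 < 1 - c k * φ) :
    0 ≤ ∑ k, α k * φ / (1 - c k * φ) :=
  Finset.sum_nonneg fun k _ => div_nonneg (mul_nonneg (hα k).le h0) (hφ k).le

lemma b_strictmono (hα : ∀ k, 0 < α k) {x y : ℝ} (hxy : x < y)
    (hx : ∀ k, 0 < 1 - c k * x) (hy : ∀ k, 0 < 1 - c k * y) :
    ∑ k, α k * x / (1 - c k * x) < ∑ k, α k * y / (1 - c k * y) := by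
  apply Finset.sum_lt_sum_of_nonempty Finset.univ_nonempty
  intro k _
  rw [div_lt_div_iff₀ (hx k) (hy k)]
  nlinarith [hα k, hx k, hy k]

end main

/-- First-order characterization of the per-service optimum: a positive maximizer `b*` of
`b ↦ log(1 + f*(b)) − λ·b` has frequency `φ = f*(b*)` solving
`(1 + φ) ∑_k α_k/(1 − c_k φ)² = 1/λ`, and conversely. -/
theorem stmt_10 {ι : Type*} [Fintype ι] [Nonempty ι] (α c : ι → ℝ)
    (hα : ∀ k, 0 < α k) (hc : ∀ k, 0 < c k)
    (fstar : ℝ → ℝ)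
    (hrange : ∀ x : ℝ, 0 ≤ x →
      fstar x ∈ Set.Ico (0 : ℝ) (1 / Finset.univ.sup' Finset.univ_nonempty c))
    (hinv : ∀ x : ℝ, 0 ≤ x → ∑ k, α k * fstar x / (1 - c k * fstar x) = x)
    (lam : ℝ) (hlam : 0 < lam) :
    (∀ bstar : ℝ, 0 < bstar →
      IsMaxOn (fun b => Real.log (1 + fstar b) - lam * b) (Set.Ici 0) bstar →
      (1 + fstar bstar) * ∑ k, α k / (1 - c k * fstar bstar) ^ 2 = 1 / lam) ∧
    (∀ φ : ℝ, φ ∈ Set.Ico (0 : ℝ) (1 / Finset.univ.sup' Finset.univ_nonempty c) →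
      (1 + φ) * ∑ k, α k / (1 - c k * φ) ^ 2 = 1 / lam →
      ∀ bstar : ℝ, 0 ≤ bstar → fstar bstar = φ →
        IsMaxOn (fun b => Real.log (1 + fstar b) - lam * b) (Set.Ici 0) bstar) := by
  set M : ℝ := 1 / Finset.univ.sup' Finset.univ_nonempty c with hM
  -- for any ψ in the domain, fstar of its bandwidth is ψ itself
  have hfinv : ∀ ψ : ℝ, ψ ∈ Set.Ico (0:ℝ) M →
      fstar (∑ k, α k * ψ / (1 - c k * ψ)) = ψ := by
    intro ψ hψ
    have hden := denom_pos c hc hψ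
    set x := ∑ k, α k * ψ / (1 - c k * ψ) with hx
    have hx0 : 0 ≤ x := b_nonneg α c hα hψ.1 hden
    have h1 := hinv x hx0
    have hden2 := denom_pos c hc (hrange x hx0)
    rcases lt_trichotomy (fstar x) ψ with h | h | h
    · exact absurd h1 (by
        have := b_strictmono α c hα h hden2 hden
        rw [← hx] at this; linarith)
    · exact h
    · exact absurd h1 (by
        have := b_strictmono α c hα h hden hden2
        rw [← hx] at this; linarith)
  constructor
  · -- forward direction
    intro bstar hb hmax
    set φ := fstar bstar with hφdef
    have hφD : φ ∈ Set.Ico (0:ℝ) M := hrange bstar hb.le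
    have hden := denom_pos c hc hφD
    have hbφ : ∑ k, α k * φ / (1 - c k * φ) = bstar := hinv bstar hb.le
    have hφpos : 0 < φ := by
      rcases hφD.1.lt_or_eq with h | h
      · exact h
      · exfalso
        rw [← h] at hbφ
        simp at hbφ
        linarith
    -- h(ψ) ≤ h(φ) for all ψ in domain
    have hle : ∀ ψ, ψ ∈ Set.Ico (0:ℝ) M →
        Real.log (1+ψ) - lam * ∑ k, α k * ψ / (1 - c k * ψ)
          ≤ Real.log (1+φ) - lam * bstar := by
      intro ψ hψ
      have hdenψ := denom_pos c hc hψ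
      have hx0 : 0 ≤ ∑ k, α k * ψ / (1 - c k * ψ) := b_nonneg α c hα hψ.1 hdenψ
      have := hmax (Set.mem_Ici.mpr hx0)
      simpa [hfinv ψ hψ] using this
    -- G ψ ≥/≤ 0 on each side
    set G : ℝ → ℝ := fun ψ => 1/(1+ψ) - lam * ∑ k, α k / (1 - c k * ψ)^2 with hG
    have hkey : ∀ ψ, ψ ∈ Set.Ico (0:ℝ) M → 0 ≤ (φ - ψ) * G ψ := by
      intro ψ hψ
      have hdenψ := denom_pos c hc hψ
      have h1 := keyIneq α c hα hc lam hlam ψ φ hψ.1 hφD.1 hdenψ hden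
      rw [hbφ] at h1
      have h2 := hle ψ hψ
      simp only [hG]
      linarith
    have hGcont : Filter.Tendsto G (nhds φ) (nhds (G φ)) := by
      apply Filter.Tendsto.sub
      · exact Filter.Tendsto.div tendsto_const_nhds
          ((continuous_const.add continuous_id).tendsto φ) (by positivity)
      · exact tendsto_const_nhds.mul (tendsto_finset_sum _ fun k _ =>
          Filter.Tendsto.div tendsto_const_nhds
            (((continuous_const.sub ((continuous_const (y := c k)).mul continuous_id)).pow 2).tendsto φ)
            (pow_ne_zero 2 (hden k).ne'))
    have hGle : G φ ≤ 0 := by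
      refine le_of_tendsto (hGcont.mono_left (nhdsWithin_le_nhds : nhdsWithin φ (Set.Ioi φ) ≤ nhds φ)) ?_
      filter_upwards [Ioo_mem_nhdsGT_of_mem (Set.mem_Ico.mpr ⟨le_refl φ, hφD.2⟩)] with ψ hψ
      have h1 := hkey ψ ⟨le_trans hφD.1 hψ.1.le, hψ.2⟩
      nlinarith [hψ.1]
    have hGge : 0 ≤ G φ := by
      refine ge_of_tendsto (hGcont.mono_left (nhdsWithin_le_nhds : nhdsWithin φ (Set.Iio φ) ≤ nhds φ)) ?_
      filter_upwards [Ioo_mem_nhdsLT_of_mem (Set.mem_Ioc.mpr ⟨hφpos, le_refl φ⟩)] with ψ hψ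
      have h1 := hkey ψ ⟨hψ.1.le, lt_trans hψ.2 hφD.2⟩
      nlinarith [hψ.2]
    have hG0 : G φ = 0 := le_antisymm hGle hGge
    simp only [hG] at hG0
    have h1φ : (0:ℝ) < 1 + φ := by linarith
    rw [eq_div_iff hlam.ne']
    have : 1/(1+φ) = lam * ∑ k, α k / (1 - c k * φ)^2 := by linarith
    field_simp at this
    simp only [mul_comm φ] at this
    linarith [this]
  · -- converse direction
    intro φ hφD hFOC bstar hb hfb
    have hden := denom_pos c hc hφD
    have h1φ : (0:ℝ) < 1 + φ := by linarith [hφD.1]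
    have hG0 : 1/(1+φ) - lam * ∑ k, α k / (1 - c k * φ)^2 = 0 := by
      rw [eq_div_iff hlam.ne'] at hFOC
      field_simp
      simp only [mul_comm φ]
      linarith [hFOC]
    have hbφ : ∑ k, α k * φ / (1 - c k * φ) = bstar := by
      have := hinv bstar hb
      rw [hfb] at this
      exact this
    rw [isMaxOn_iff]
    intro x hx
    have hx0 : (0:ℝ) ≤ x := hx
    have hψD := hrange x hx0
    have hdenψ := denom_pos c hc hψD
    have h1 := keyIneq α c hα hc lam hlam φ (fstar x) hφD.1 hψD.1 hden hdenψ
    rw [hinv x hx0, hG0, hbφ] at h1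
    simp only [hfb]
    linarith
end

section
/- (Proposition 2, uniqueness of the market clearing price) For each service n define the bandwidth demand function d_n(p) = sup{ b ≥ 0 : (f*_n)′(b) ≥ p } for p > 0 (with d_n(p) = 0 when p ≥ (f*_n)′(0)). Then for every B > 0 there exists exactly one ρ > 0 such that ∑_{n=1}^N d_n(ρ) = B. -/
open Set Finset

section Service

variable {K : Type*} [Fintype K] [Nonempty K]

private noncomputable def gfun (a c : K → ℝ) (f : ℝ) : ℝ := ∑ k, a k * f / (1 - c k * f)

private noncomputable def gder (a c : K → ℝ) (f : ℝ) : ℝ := ∑ k, a k / (1 - c k * f) ^ 2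

private noncomputable def cmax (c : K → ℝ) : ℝ := Finset.univ.sup' Finset.univ_nonempty c

private theorem cmax_pos (c : K → ℝ) (hc : ∀ k, 0 < c k) : 0 < cmax c := by
  obtain ⟨k⟩ := ‹Nonempty K›
  exact (hc k).trans_le (Finset.le_sup' c (Finset.mem_univ k))

private theorem den_pos {c : K → ℝ} (hc : ∀ k, 0 < c k) {f : ℝ}
    (hf : f ∈ Set.Ico (0:ℝ) (1 / cmax c)) (k : K) : 0 < 1 - c k * f := by
  have h1 : c k * f ≤ cmax c * f :=
    mul_le_mul_of_nonneg_right (Finset.le_sup' c (Finset.mem_univ k)) hf.1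
  have h2 : cmax c * f < 1 := by
    have := (lt_div_iff₀ (cmax_pos c hc)).mp hf.2
    linarith [this]
  linarith

private theorem gfun_nonneg {a c : K → ℝ} (ha : ∀ k, 0 < a k) (hc : ∀ k, 0 < c k) {f : ℝ}
    (hf : f ∈ Set.Ico (0:ℝ) (1 / cmax c)) : 0 ≤ gfun a c f := by
  refine Finset.sum_nonneg fun k _ => div_nonneg ?_ (den_pos hc hf k).le
  exact mul_nonneg (ha k).le hf.1

private theorem gfun_zero (a c : K → ℝ) : gfun a c 0 = 0 := by simp [gfun]

private theorem gfun_mono {a c : K → ℝ} (ha : ∀ k, 0 < a k) (hc : ∀ k, 0 < c k) :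
    StrictMonoOn (gfun a c) (Set.Ico (0:ℝ) (1 / cmax c)) := by
  intro f1 h1 f2 h2 h12
  refine Finset.sum_lt_sum_of_nonempty Finset.univ_nonempty fun k _ => ?_
  rw [div_lt_div_iff₀ (den_pos hc h1 k) (den_pos hc h2 k)]
  nlinarith [mul_lt_mul_of_pos_left h12 (ha k), (hc k).le, h1.1, h2.1,
    mul_nonneg (mul_nonneg (ha k).le (hc k).le) (mul_nonneg h1.1 h2.1)]

private theorem gder_zero (a c : K → ℝ) : gder a c 0 = ∑ k, a k := by simp [gder]

private theorem gder_pos {a c : K → ℝ} (ha : ∀ k, 0 < a k) (hc : ∀ k, 0 < c k) {f : ℝ}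
    (hf : f ∈ Set.Ico (0:ℝ) (1 / cmax c)) : 0 < gder a c f :=
  Finset.sum_pos (fun k _ => div_pos (ha k) (pow_pos (den_pos hc hf k) 2)) Finset.univ_nonempty

private theorem gder_mono {a c : K → ℝ} (ha : ∀ k, 0 < a k) (hc : ∀ k, 0 < c k) :
    StrictMonoOn (gder a c) (Set.Ico (0:ℝ) (1 / cmax c)) := by
  intro f1 h1 f2 h2 h12
  refine Finset.sum_lt_sum_of_nonempty Finset.univ_nonempty fun k _ => ?_
  have hlt : 1 - c k * f2 < 1 - c k * f1 := by nlinarith [hc k]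
  exact div_lt_div_of_pos_left (ha k) (pow_pos (den_pos hc h2 k) 2)
    (pow_lt_pow_left₀ hlt (den_pos hc h2 k).le two_ne_zero)

private theorem hasDerivAt_gfun {a c : K → ℝ} (hc : ∀ k, 0 < c k) {f : ℝ}
    (hf : f ∈ Set.Ico (0:ℝ) (1 / cmax c)) : HasDerivAt (gfun a c) (gder a c f) f := by
  have : HasDerivAt (fun x => ∑ k, a k * x / (1 - c k * x)) (∑ k, a k / (1 - c k * f) ^ 2) f := by
    refine HasDerivAt.fun_sum fun k _ => ?_
    have hu : HasDerivAt (fun x : ℝ => a k * x) (a k) f := by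
      simpa using (hasDerivAt_id f).const_mul (a k)
    have hv : HasDerivAt (fun x : ℝ => 1 - c k * x) (-(c k)) f := by
      simpa using ((hasDerivAt_id f).const_mul (c k)).const_sub 1
    have := hu.fun_div hv (den_pos hc hf k).ne'
    refine this.congr_deriv ?_
    have h0 := (den_pos hc hf k).ne'
    field_simp
    ring
  exact this

private theorem gder_continuousOn {a c : K → ℝ} (hc : ∀ k, 0 < c k) :
    ContinuousOn (gder a c) (Set.Ico (0:ℝ) (1 / cmax c)) := by
  refine continuousOn_finset_sum _ fun k _ => ContinuousOn.div continuousOn_const ?_ ?_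
  · exact ((continuous_const.sub (continuous_const.mul continuous_id)).pow 2).continuousOn
  · exact fun f hf => pow_ne_zero 2 (den_pos hc hf k).ne'

private theorem exists_gder_eq {a c : K → ℝ} (ha : ∀ k, 0 < a k) (hc : ∀ k, 0 < c k)
    {q : ℝ} (hq : ∑ k, a k ≤ q) :
    ∃ s ∈ Set.Ico (0:ℝ) (1 / cmax c), gder a c s = q := by
  have hSa : 0 < ∑ k, a k := Finset.sum_pos (fun k _ => ha k) Finset.univ_nonempty
  have hqpos : 0 < q := hSa.trans_le hq
  obtain ⟨k₀, -, hk₀⟩ := Finset.exists_mem_eq_sup' (Finset.univ_nonempty (α := K)) c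
  have hcm : 0 < cmax c := cmax_pos c hc
  set r : ℝ := Real.sqrt (a k₀ / q) with hr
  have hrpos : 0 < r := Real.sqrt_pos.mpr (div_pos (ha k₀) hqpos)
  set s0 : ℝ := max 0 ((1 - r) / cmax c) with hs0
  have hs0mem : s0 ∈ Set.Ico (0:ℝ) (1 / cmax c) := by
    constructor
    · exact le_max_left _ _
    · refine max_lt (by positivity) ?_
      apply div_lt_div_of_pos_right _ hcm
      linarith
  have hkey : 1 - cmax c * s0 ≤ r := by
    rcases le_total ((1 - r) / cmax c) 0 with h | h
    · rw [hs0, max_eq_left h]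
      have : 1 - r ≤ 0 := by
        by_contra hcon
        push_neg at hcon
        exact absurd (div_pos hcon hcm) (not_lt.mpr h)
      linarith
    · rw [hs0, max_eq_right h]
      rw [mul_div_cancel₀ _ hcm.ne']
      linarith
  have hden : 0 < 1 - c k₀ * s0 := den_pos hc hs0mem k₀
  have hden' : 1 - c k₀ * s0 ≤ r := by
    have : c k₀ = cmax c := by rw [cmax, hk₀]
    rw [this]; exact hkey
  have hsq : (1 - c k₀ * s0) ^ 2 ≤ a k₀ / q := by
    have : (1 - c k₀ * s0) ^ 2 ≤ r ^ 2 := by nlinarith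
    rwa [hr, Real.sq_sqrt (div_pos (ha k₀) hqpos).le] at this
  have hterm : q ≤ a k₀ / (1 - c k₀ * s0) ^ 2 := by
    rw [le_div_iff₀ (pow_pos hden 2)]
    calc q * (1 - c k₀ * s0) ^ 2 ≤ q * (a k₀ / q) :=
          mul_le_mul_of_nonneg_left hsq hqpos.le
      _ = a k₀ := by field_simp
  have hval : q ≤ gder a c s0 := by
    refine hterm.trans ?_
    exact Finset.single_le_sum
      (fun k _ => div_nonneg (ha k).le (pow_pos (den_pos hc hs0mem k) 2).le)
      (Finset.mem_univ k₀)
  have hIcc : Set.Icc (0:ℝ) s0 ⊆ Set.Ico (0:ℝ) (1 / cmax c) := fun x hx =>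
    ⟨hx.1, lt_of_le_of_lt hx.2 hs0mem.2⟩
  have hcont : ContinuousOn (gder a c) (Set.Icc (0:ℝ) s0) :=
    (gder_continuousOn hc).mono hIcc
  have := intermediate_value_Icc (le_max_left 0 ((1 - r) / cmax c)) hcont
  have hmem : q ∈ Set.Icc (gder a c 0) (gder a c s0) := by
    rw [gder_zero]; exact ⟨hq, hval⟩
  obtain ⟨s, hs, hgs⟩ := this hmem
  exact ⟨s, hIcc hs, hgs⟩
private theorem service_demand (a c : K → ℝ) (ha : ∀ k, 0 < a k) (hc : ∀ k, 0 < c k)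
    (fs : ℝ → ℝ)
    (hrange : ∀ x : ℝ, 0 ≤ x →
      fs x ∈ Set.Ico (0:ℝ) (1 / Finset.univ.sup' Finset.univ_nonempty c))
    (hinv : ∀ x : ℝ, 0 ≤ x → ∑ k, a k * fs x / (1 - c k * fs x) = x) :
    ∃ h : ℝ → ℝ,
      (∀ p : ℝ, 0 < p →
        sSup {b : ℝ | 0 ≤ b ∧ p ≤ derivWithin fs (Set.Ici 0) b} = h (1/p)) ∧
      (∀ q q' : ℝ, q ≤ q' → h q ≤ h q') ∧
      (∀ q q' : ℝ, q < q' → 0 < h q → h q < h q') ∧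
      (∀ q : ℝ, 0 ≤ h q) ∧
      (∃ q0 : ℝ, 0 < q0 ∧ ∀ q ≤ q0, h q = 0) ∧
      (∀ t : ℝ, 0 ≤ t → ∃ q : ℝ, 0 < q ∧ h q = t) ∧
      Continuous h := by
  have hrange' : ∀ x : ℝ, 0 ≤ x → fs x ∈ Set.Ico (0:ℝ) (1 / cmax c) := hrange
  have hginv : ∀ x : ℝ, 0 ≤ x → gfun a c (fs x) = x := fun x hx => hinv x hx
  set M : ℝ := 1 / cmax c with hM
  set Sa : ℝ := ∑ k, a k with hSa
  have hSapos : 0 < Sa := Finset.sum_pos (fun k _ => ha k) Finset.univ_nonempty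
  have h0mem : (0:ℝ) ∈ Set.Ico (0:ℝ) M := ⟨le_refl 0, by rw [hM]; exact one_div_pos.mpr (cmax_pos c hc)⟩
  -- sigma
  have key : ∀ q : ℝ, ∃ s ∈ Set.Ico (0:ℝ) M, gder a c s = max q Sa := fun q =>
    exists_gder_eq ha hc (le_max_right q Sa)
  choose σ hσmem hσval using key
  set h : ℝ → ℝ := fun q => gfun a c (σ q) with hh
  have guniq := (gfun_mono ha hc).injOn
  have duniq := (gder_mono ha hc).injOn
  have σzero : ∀ q : ℝ, q ≤ Sa → σ q = 0 := by
    intro q hq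
    refine duniq (hσmem q) h0mem ?_
    rw [hσval q, gder_zero, max_eq_right hq]
  have σmono : ∀ q q' : ℝ, q ≤ q' → σ q ≤ σ q' := by
    intro q q' hqq'
    by_contra hcon
    push_neg at hcon
    have := (gder_mono ha hc) (hσmem q') (hσmem q) hcon
    rw [hσval, hσval] at this
    exact absurd this (not_lt.mpr (max_le_max hqq' le_rfl))
  have σpos : ∀ q : ℝ, Sa < q → 0 < σ q := by
    intro q hq
    rcases (hσmem q).1.lt_or_eq with h' | h'
    · exact h'
    · exfalso
      have := hσval q
      rw [← h', gder_zero, max_eq_left hq.le] at this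
      exact absurd this.symm hq.ne'
  -- fstar facts
  have fs_mono : MonotoneOn fs (Set.Ici (0:ℝ)) := by
    intro x hx y hy hxy
    by_contra hcon
    push_neg at hcon
    have := (gfun_mono ha hc) (hrange' y hy) (hrange' x hx) hcon
    rw [hginv x hx, hginv y hy] at this
    exact absurd hxy (not_le.mpr this)
  have fs_surj : ∀ s ∈ Set.Ico (0:ℝ) M, ∃ x : ℝ, 0 ≤ x ∧ fs x = s := by
    intro s hs
    refine ⟨gfun a c s, gfun_nonneg ha hc hs, ?_⟩
    refine guniq (hrange' _ (gfun_nonneg ha hc hs)) hs (hginv _ (gfun_nonneg ha hc hs))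
  have fs_zero : fs 0 = 0 :=
    guniq (hrange' 0 le_rfl) h0mem (by rw [hginv 0 le_rfl, gfun_zero])
  have fs_pos : ∀ b : ℝ, 0 < b → 0 < fs b := by
    intro b hb
    rcases (hrange' b hb.le).1.lt_or_eq with h' | h'
    · exact h'
    · exfalso
      have := hginv b hb.le
      rw [← h', gfun_zero] at this
      exact absurd this.symm hb.ne'
  have fs_contAt : ∀ b : ℝ, 0 < b → ContinuousAt fs b := by
    intro b hb
    refine continuousAt_of_monotoneOn_of_image_mem_nhds fs_mono (Ici_mem_nhds hb) ?_
    have hsub : Set.Ioo (0:ℝ) M ⊆ fs '' Set.Ici 0 := by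
      intro s hs
      obtain ⟨x, hx, hfx⟩ := fs_surj s ⟨hs.1.le, hs.2⟩
      exact ⟨x, hx, hfx⟩
    exact Filter.mem_of_superset (Ioo_mem_nhds (fs_pos b hb) (hrange' b hb.le).2) hsub
  have fs_deriv : ∀ b : ℝ, 0 < b →
      derivWithin fs (Set.Ici 0) b = (gder a c (fs b))⁻¹ := by
    intro b hb
    have hd : HasDerivAt fs (gder a c (fs b))⁻¹ b := by
      refine HasDerivAt.of_local_left_inverse (fs_contAt b hb)
        (hasDerivAt_gfun hc (hrange' b hb.le)) (gder_pos ha hc (hrange' b hb.le)).ne' ?_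
      filter_upwards [Ioi_mem_nhds hb] with y hy
      exact hginv y (le_of_lt hy)
    rw [derivWithin_of_mem_nhds (Ici_mem_nhds hb), hd.deriv]
  -- the demand formula
  refine ⟨h, ?_, ?_, ?_, ?_, ?_, ?_, ?_⟩
  · -- sSup formula
    intro p hp
    set S : Set ℝ := {b : ℝ | 0 ≤ b ∧ p ≤ derivWithin fs (Set.Ici 0) b} with hS
    have hq : (0:ℝ) < 1/p := by positivity
    have hupper : ∀ b ∈ S, 0 < b → gder a c (fs b) ≤ 1/p := by
      intro b hbS hb
      have h1 : p ≤ (gder a c (fs b))⁻¹ := by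
        have := hbS.2; rwa [fs_deriv b hb] at this
      have h2 : 0 < gder a c (fs b) := gder_pos ha hc (hrange' b hb.le)
      rw [one_div]
      rw [← inv_inv (gder a c (fs b))]
      exact inv_anti₀ hp h1
    rcases lt_or_ge Sa (1/p) with hcase | hcase
    · -- positive demand
      set s := σ (1/p) with hs
      have hgs : gder a c s = 1/p := by rw [hσval, max_eq_left hcase.le]
      have hspos : 0 < s := σpos _ hcase
      set t := gfun a c s with ht
      have htpos : 0 < t := by
        rw [ht, ← gfun_zero a c]
        exact (gfun_mono ha hc) h0mem (hσmem _) hspos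
      have hfst : fs t = s :=
        guniq (hrange' t htpos.le) (hσmem _) (hginv t htpos.le)
      have htS : t ∈ S := by
        constructor
        · exact htpos.le
        · rw [fs_deriv t htpos, hfst, hgs, one_div, inv_inv]
      have hub : ∀ b ∈ S, b ≤ t := by
        intro b hbS
        rcases hbS.1.lt_or_eq with hb | hb
        · have h1 : gder a c (fs b) ≤ gder a c s := by rw [hgs]; exact hupper b hbS hb
          have h2 : fs b ≤ s := by
            by_contra hcon
            push_neg at hcon
            exact absurd ((gder_mono ha hc) (hσmem _) (hrange' b hb.le) hcon)
              (not_lt.mpr h1)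
          have h3 : gfun a c (fs b) ≤ gfun a c s :=
            (gfun_mono ha hc).monotoneOn (hrange' b hb.le) (hσmem _) h2
          rwa [hginv b hb.le] at h3
        · rw [← hb]; exact htpos.le
      exact IsGreatest.csSup_eq ⟨htS, hub⟩
    · -- zero demand
      have hzero : h (1/p) = 0 := by
        rw [hh]; simp only
        rw [σzero _ hcase, gfun_zero]
      rw [hzero]
      have hsub : S ⊆ {0} := by
        intro b hbS
        rcases hbS.1.lt_or_eq with hb | hb
        · exfalso
          have h1 := hupper b hbS hb
          have h2 : gder a c 0 < gder a c (fs b) :=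
            (gder_mono ha hc) h0mem (hrange' b hb.le) (fs_pos b hb)
          rw [gder_zero] at h2
          exact absurd (h2.trans_le h1) (not_lt.mpr hcase)
        · simp [← hb]
      rcases S.eq_empty_or_nonempty with hemp | hne
      · rw [hemp, Real.sSup_empty]
      · rw [Set.eq_singleton_iff_nonempty_unique_mem.mpr ⟨hne, fun x hx => hsub hx⟩]
        exact csSup_singleton 0
  · -- monotone
    intro q q' hqq'
    exact (gfun_mono ha hc).monotoneOn (hσmem q) (hσmem q') (σmono q q' hqq')
  · -- strict where positive
    intro q q' hlt hpos
    have hσq : 0 < σ q := by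
      by_contra hcon
      push_neg at hcon
      have : σ q = 0 := le_antisymm hcon (hσmem q).1
      rw [hh] at hpos; simp only at hpos
      rw [this, gfun_zero] at hpos
      exact lt_irrefl 0 hpos
    have hqSa : Sa < q := by
      by_contra hcon
      push_neg at hcon
      rw [σzero q hcon] at hσq
      exact lt_irrefl 0 hσq
    have h1 : gder a c (σ q) < gder a c (σ q') := by
      rw [hσval, hσval, max_eq_left hqSa.le, max_eq_left (hqSa.trans hlt).le]
      exact hlt
    have h2 : σ q < σ q' := by
      by_contra hcon
      push_neg at hcon
      exact absurd ((gder_mono ha hc).monotoneOn (hσmem q') (hσmem q) hcon)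
        (not_le.mpr h1)
    exact (gfun_mono ha hc) (hσmem q) (hσmem q') h2
  · -- nonneg
    intro q
    exact gfun_nonneg ha hc (hσmem q)
  · -- zero for small q
    exact ⟨Sa, hSapos, fun q hq => by rw [hh]; simp only; rw [σzero q hq, gfun_zero]⟩
  · -- surjective onto [0, ∞)
    intro t ht
    set q := gder a c (fs t) with hqdef
    have hq1 : Sa ≤ q := by
      have h1 := (gder_mono ha hc).monotoneOn h0mem (hrange' t ht) (hrange' t ht).1
      rw [gder_zero] at h1
      exact h1
    refine ⟨q, hSapos.trans_le hq1, ?_⟩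
    have hσq : σ q = fs t := by
      refine duniq (hσmem q) (hrange' t ht) ?_
      rw [hσval, max_eq_left hq1]
    rw [hh]; simp only
    rw [hσq, hginv t ht]
  · -- continuity
    set H : ℝ → ℝ := fun q => h q + min (q - Sa) 0 with hH
    have hmono' : ∀ q q' : ℝ, q ≤ q' → h q ≤ h q' := fun q q' hqq' =>
      (gfun_mono ha hc).monotoneOn (hσmem q) (hσmem q') (σmono q q' hqq')
    have Hmono : Monotone H := by
      intro q q' hqq'
      exact add_le_add (hmono' q q' hqq') (min_le_min (by linarith) le_rfl)
    have Hsurj : Function.Surjective H := by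
      intro t
      rcases le_or_gt 0 t with ht | ht
      · set q := gder a c (fs t) with hqdef
        have hq1 : Sa ≤ q := by
          have h1 := (gder_mono ha hc).monotoneOn h0mem (hrange' t ht) (hrange' t ht).1
          rw [gder_zero] at h1
          exact h1
        have hσq : σ q = fs t := by
          refine duniq (hσmem q) (hrange' t ht) ?_
          rw [hσval, max_eq_left hq1]
        refine ⟨q, ?_⟩
        rw [hH]; simp only
        rw [hh]; simp only
        rw [hσq, hginv t ht, min_eq_right (by linarith), add_zero]
      · refine ⟨t + Sa, ?_⟩
        rw [hH]; simp only
        rw [hh]; simp only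
        rw [σzero _ (by linarith), gfun_zero, min_eq_left (by linarith)]
        ring
    have Hcont : Continuous H := Hmono.continuous_of_surjective Hsurj
    have : h = fun q => H q - min (q - Sa) 0 := by
      funext q; rw [hH]; ring
    rw [this]
    exact Hcont.sub (((continuous_id.sub continuous_const).min continuous_const))
end Service

/-- (Proposition 2, uniqueness of the market clearing price) With bandwidth demand
functions `d_n(p) = sup{b ≥ 0 : (f*_n)′(b) ≥ p}`, for every `B > 0` there is exactly one
price `ρ > 0` such that `∑_n d_n(ρ) = B`. -/
theorem stmt_13 {N : ℕ} (hN : 0 < N)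
    (ι : Fin N → Type*) [∀ n, Fintype (ι n)] [∀ n, Nonempty (ι n)]
    (α c : ∀ n, ι n → ℝ)
    (hα : ∀ n k, 0 < α n k) (hc : ∀ n k, 0 < c n k)
    (fstar : Fin N → ℝ → ℝ)
    (hrange : ∀ n, ∀ x : ℝ, 0 ≤ x →
      fstar n x ∈ Set.Ico (0 : ℝ) (1 / Finset.univ.sup' Finset.univ_nonempty (c n)))
    (hinv : ∀ n, ∀ x : ℝ, 0 ≤ x →
      ∑ k, α n k * fstar n x / (1 - c n k * fstar n x) = x)
    (B : ℝ) (hB : 0 < B) :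
    ∃! ρ : ℝ, 0 < ρ ∧
      ∑ n, sSup {b : ℝ | 0 ≤ b ∧ ρ ≤ derivWithin (fstar n) (Set.Ici 0) b} = B := by
  have pkg : ∀ n : Fin N, ∃ h : ℝ → ℝ,
      (∀ p : ℝ, 0 < p →
        sSup {b : ℝ | 0 ≤ b ∧ p ≤ derivWithin (fstar n) (Set.Ici 0) b} = h (1/p)) ∧
      (∀ q q' : ℝ, q ≤ q' → h q ≤ h q') ∧
      (∀ q q' : ℝ, q < q' → 0 < h q → h q < h q') ∧
      (∀ q : ℝ, 0 ≤ h q) ∧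
      (∃ q0 : ℝ, 0 < q0 ∧ ∀ q ≤ q0, h q = 0) ∧
      (∀ t : ℝ, 0 ≤ t → ∃ q : ℝ, 0 < q ∧ h q = t) ∧
      Continuous h :=
    fun n => service_demand (α n) (c n) (hα n) (hc n) (fstar n) (hrange n) (hinv n)
  choose h hd hmono hstrict hnonneg hq0ex hsurj hcont using pkg
  choose q0 hq0pos hq0 using hq0ex
  set D : ℝ → ℝ := fun p => ∑ n, h n (1/p) with hD
  have n0 : Fin N := ⟨0, hN⟩
  have hDval : ∀ ρ : ℝ, 0 < ρ →
      (∑ n, sSup {b : ℝ | 0 ≤ b ∧ ρ ≤ derivWithin (fstar n) (Set.Ici 0) b}) = D ρ :=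
    fun ρ hρ => Finset.sum_congr rfl fun n _ => hd n ρ hρ
  -- the small price: demand at least B
  obtain ⟨q1, hq1pos, hq1⟩ := hsurj n0 B hB.le
  set ρ1 : ℝ := q1⁻¹ with hρ1
  have hρ1pos : 0 < ρ1 := by positivity
  have hinvρ1 : 1 / ρ1 = q1 := by rw [hρ1, one_div, inv_inv]
  have hDρ1 : B ≤ D ρ1 := by
    have : h n0 (1/ρ1) = B := by rw [hinvρ1]; exact hq1
    rw [hD]
    calc B = h n0 (1/ρ1) := this.symm
      _ ≤ ∑ n, h n (1/ρ1) :=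
        Finset.single_le_sum (fun n _ => hnonneg n _) (Finset.mem_univ n0)
  -- the big price: zero demand
  have hne : (Finset.univ : Finset (Fin N)).Nonempty := ⟨n0, Finset.mem_univ n0⟩
  set Q0 : ℝ := Finset.univ.inf' hne q0 with hQ0
  have hQ0pos : 0 < Q0 := by
    rw [hQ0, Finset.lt_inf'_iff]
    exact fun n _ => hq0pos n
  set ρ2 : ℝ := Q0⁻¹ with hρ2
  have hρ2pos : 0 < ρ2 := by positivity
  have hDρ2 : D ρ2 = 0 := by
    rw [hD]
    refine Finset.sum_eq_zero fun n _ => ?_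
    refine hq0 n _ ?_
    rw [hρ2, one_div, inv_inv]
    exact Finset.inf'_le q0 (Finset.mem_univ n)
  -- D is antitone on positive reals
  have hDanti : ∀ p p' : ℝ, 0 < p → p ≤ p' → D p' ≤ D p := by
    intro p p' hp hpp'
    refine Finset.sum_le_sum fun n _ => hmono n _ _ ?_
    exact one_div_le_one_div_of_le hp hpp'
  have hρ12 : ρ1 ≤ ρ2 := by
    by_contra hcon
    push_neg at hcon
    have := hDanti ρ2 ρ1 hρ2pos hcon.le
    rw [hDρ2] at this
    linarith
  -- continuity of D on [ρ1, ρ2]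
  have hDcont : ContinuousOn D (Set.Icc ρ1 ρ2) := by
    rw [hD]
    refine continuousOn_finset_sum _ fun n _ => ?_
    refine (hcont n).comp_continuousOn ?_
    refine ContinuousOn.div continuousOn_const continuousOn_id ?_
    intro x hx
    exact (hρ1pos.trans_le hx.1).ne'
  have hmem : B ∈ Set.Icc (D ρ2) (D ρ1) := by
    rw [hDρ2]; exact ⟨hB.le, hDρ1⟩
  obtain ⟨ρ, hρmem, hDρ⟩ := intermediate_value_Icc' hρ12 hDcont hmem
  have hρpos : 0 < ρ := hρ1pos.trans_le hρmem.1
  -- uniqueness key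
  have keyuniq : ∀ x y : ℝ, 0 < x → x < y → D y = B → D x ≠ B := by
    intro x y hx hxy hDy
    have hxy' : 1/y < 1/x := by
      apply one_div_lt_one_div_of_lt hx hxy
    obtain ⟨n, hn⟩ : ∃ n : Fin N, 0 < h n (1/y) := by
      by_contra hcon
      push_neg at hcon
      have : D y = 0 :=
        Finset.sum_eq_zero fun n _ => le_antisymm (hcon n) (hnonneg n _)
      rw [hDy] at this
      linarith
    have hlt : D y < D x := by
      refine Finset.sum_lt_sum (fun n _ => hmono n _ _ hxy'.le) ⟨n, Finset.mem_univ n, ?_⟩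
      exact hstrict n _ _ hxy' hn
    intro hDx
    rw [hDx, hDy] at hlt
    exact lt_irrefl B hlt
  refine ⟨ρ, ⟨hρpos, by rw [hDval ρ hρpos]; exact hDρ⟩, ?_⟩
  rintro ρ' ⟨hρ'pos, hρ'val⟩
  have hDρ' : D ρ' = B := by rw [← hDval ρ' hρ'pos]; exact hρ'val
  rcases lt_trichotomy ρ' ρ with hlt | heq | hgt
  · exact absurd hDρ' (keyuniq ρ' ρ hρ'pos hlt hDρ)
  · exact heq
  · exact absurd hDρ (keyuniq ρ ρ' hρpos hgt hDρ').elim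
end

section
/- (Proposition 3) Fix α ∈ [0, 1] and for each service n define g_n(b) = (1 − α)·f*_n(b) + α·log(1 + f*_n(b)). Then each g_n is strictly increasing and concave on [0, ∞). Moreover, if (b*_1, …, b*_N) satisfies b*_n > 0 for all n, ∑_{n=1}^N b*_n = B, and there exists ζ > 0 with g_n′(b*_n) = ζ for every n, then (b*_1, …, b*_N) maximizes ∑_{n=1}^N [(1 − α)·f*_n(b_n) + α·log(1 + f*_n(b_n))] over all (b_1, …, b_N) with b_n ≥ 0 and ∑_{n=1}^N b_n = B. -/
lemma aux_mono_le {A C u v : ℝ} (hA : 0 < A) (hC : 0 < C) (hu : 0 ≤ u) (huv : u ≤ v)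
    (hv : v < 1 / C) : A * u / (1 - C * u) ≤ A * v / (1 - C * v) := by
  have hdv : 0 < 1 - C * v := by
    rw [sub_pos]; rw [lt_div_iff₀ hC] at hv; linarith [mul_comm C v]
  have hdu : 0 < 1 - C * u := by nlinarith
  rw [div_le_div_iff₀ hdu hdv]
  nlinarith

lemma aux_mono_lt {A C u v : ℝ} (hA : 0 < A) (hC : 0 < C) (hu : 0 ≤ u) (huv : u < v)
    (hv : v < 1 / C) : A * u / (1 - C * u) < A * v / (1 - C * v) := by
  have hdv : 0 < 1 - C * v := by
    rw [sub_pos]; rw [lt_div_iff₀ hC] at hv; linarith [mul_comm C v]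
  have hdu : 0 < 1 - C * u := by nlinarith
  rw [div_lt_div_iff₀ hdu hdv]
  nlinarith

lemma aux_conv {A C u v t s : ℝ} (hA : 0 < A) (hC : 0 < C) (hu : u < 1 / C) (hv : v < 1 / C)
    (ht : 0 ≤ t) (hs : 0 ≤ s) (hts : t + s = 1) :
    A * (t * u + s * v) / (1 - C * (t * u + s * v)) ≤
      t * (A * u / (1 - C * u)) + s * (A * v / (1 - C * v)) := by
  have hdu : 0 < 1 - C * u := by
    rw [sub_pos]; rw [lt_div_iff₀ hC] at hu; linarith [mul_comm C u]
  have hdv : 0 < 1 - C * v := by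
    rw [sub_pos]; rw [lt_div_iff₀ hC] at hv; linarith [mul_comm C v]
  have hdz : 0 < 1 - C * (t * u + s * v) := by
    rcases ht.eq_or_lt with h | h
    · have hs1 : s = 1 := by linarith
      simp [← h, hs1]; nlinarith
    · nlinarith [mul_pos h hdu, mul_nonneg hs hdv.le]
  rw [div_le_iff₀ hdz, mul_comm t (A * u / (1 - C * u)), mul_comm s (A * v / (1 - C * v)),
    div_mul_eq_mul_div, div_mul_eq_mul_div, div_add_div _ _ hdu.ne' hdv.ne', div_mul_eq_mul_div,
    le_div_iff₀ (mul_pos hdu hdv)]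
  obtain rfl : s = 1 - t := by linarith
  nlinarith [mul_nonneg (mul_nonneg (mul_nonneg (mul_nonneg ht hs) hA.le) hC.le)
    (sq_nonneg (u - v))]




/-- (Proposition 3) For `α ∈ [0,1]`, each fairness-adjusted benefit
`g_n(b) = (1−α) f*_n(b) + α log(1 + f*_n(b))` is strictly increasing and concave on `[0,∞)`;
moreover any positive allocation exhausting `B` that equalizes marginal benefits
`g_n′(b*_n) = ζ > 0` maximizes `∑_n g_n(b_n)` over the feasible set. -/
theorem stmt_14 {N : ℕ} (ι : Fin N → Type*) [∀ n, Fintype (ι n)] [∀ n, Nonempty (ι n)]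
    (α c : ∀ n, ι n → ℝ)
    (hα : ∀ n k, 0 < α n k) (hc : ∀ n k, 0 < c n k)
    (fstar : Fin N → ℝ → ℝ)
    (hrange : ∀ n, ∀ x : ℝ, 0 ≤ x →
      fstar n x ∈ Set.Ico (0 : ℝ) (1 / Finset.univ.sup' Finset.univ_nonempty (c n)))
    (hinv : ∀ n, ∀ x : ℝ, 0 ≤ x →
      ∑ k, α n k * fstar n x / (1 - c n k * fstar n x) = x)
    (B : ℝ) (hB : 0 < B)
    (a : ℝ) (ha0 : 0 ≤ a) (ha1 : a ≤ 1) :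
    (∀ n, StrictMonoOn
        (fun b => (1 - a) * fstar n b + a * Real.log (1 + fstar n b)) (Set.Ici 0) ∧
      ConcaveOn ℝ (Set.Ici 0)
        (fun b => (1 - a) * fstar n b + a * Real.log (1 + fstar n b))) ∧
    (∀ bstar : Fin N → ℝ, (∀ n, 0 < bstar n) → ∑ n, bstar n = B →
      ∀ ζ : ℝ, 0 < ζ →
      (∀ n, deriv (fun b => (1 - a) * fstar n b + a * Real.log (1 + fstar n b))
          (bstar n) = ζ) →
      ∀ b : Fin N → ℝ, (∀ n, 0 ≤ b n) → ∑ n, b n = B →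
        ∑ n, ((1 - a) * fstar n (b n) + a * Real.log (1 + fstar n (b n))) ≤
          ∑ n, ((1 - a) * fstar n (bstar n) + a * Real.log (1 + fstar n (bstar n)))) := by
  -- basic facts about `fstar`
  have hfM : ∀ n, ∀ x : ℝ, 0 ≤ x → ∀ k, fstar n x < 1 / c n k := by
    intro n x hx k
    refine lt_of_lt_of_le (hrange n x hx).2 (one_div_le_one_div_of_le (hc n k) ?_)
    exact Finset.le_sup' (c n) (Finset.mem_univ k)
  -- strict monotonicity of fstar
  have hmonoF : ∀ n, ∀ x y : ℝ, 0 ≤ x → 0 ≤ y → x < y → fstar n x < fstar n y := by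
    intro n x y hx hy hxy
    by_contra h
    push_neg at h
    have : y ≤ x := by
      calc y = ∑ k, α n k * fstar n y / (1 - c n k * fstar n y) := (hinv n y hy).symm
        _ ≤ ∑ k, α n k * fstar n x / (1 - c n k * fstar n x) :=
          Finset.sum_le_sum fun k _ =>
            aux_mono_le (hα n k) (hc n k) (hrange n y hy).1 h (hfM n x hx k)
        _ = x := hinv n x hx
    linarith
  -- concavity inequality for fstar
  have hconcF : ∀ n, ∀ x y t s : ℝ, 0 ≤ x → 0 ≤ y → 0 ≤ t → 0 ≤ s → t + s = 1 →
      t * fstar n x + s * fstar n y ≤ fstar n (t * x + s * y) := by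
    intro n x y t s hx hy ht hs hts
    have hz0 : 0 ≤ t * x + s * y := add_nonneg (mul_nonneg ht hx) (mul_nonneg hs hy)
    have hvlt : ∀ k, t * fstar n x + s * fstar n y < 1 / c n k := by
      intro k
      have h1 : t * fstar n x ≤ t * max (fstar n x) (fstar n y) :=
        mul_le_mul_of_nonneg_left (le_max_left _ _) ht
      have h2 : s * fstar n y ≤ s * max (fstar n x) (fstar n y) :=
        mul_le_mul_of_nonneg_left (le_max_right _ _) hs
      have h3 : t * max (fstar n x) (fstar n y) + s * max (fstar n x) (fstar n y)
          = max (fstar n x) (fstar n y) := by rw [← add_mul, hts, one_mul]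
      have h4 : max (fstar n x) (fstar n y) < 1 / c n k :=
        max_lt (hfM n x hx k) (hfM n y hy k)
      linarith
    by_contra h
    push_neg at h
    have hstep : t * x + s * y <
        ∑ k, α n k * (t * fstar n x + s * fstar n y) /
          (1 - c n k * (t * fstar n x + s * fstar n y)) := by
      calc t * x + s * y
          = ∑ k, α n k * fstar n (t * x + s * y) / (1 - c n k * fstar n (t * x + s * y)) :=
            (hinv n (t * x + s * y) hz0).symm
        _ < _ := Finset.sum_lt_sum_of_nonempty Finset.univ_nonempty fun k _ =>
            aux_mono_lt (hα n k) (hc n k) (hrange n (t * x + s * y) hz0).1 h (hvlt k)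
    have hstep2 : ∑ k, α n k * (t * fstar n x + s * fstar n y) /
          (1 - c n k * (t * fstar n x + s * fstar n y)) ≤ t * x + s * y := by
      calc ∑ k, α n k * (t * fstar n x + s * fstar n y) /
            (1 - c n k * (t * fstar n x + s * fstar n y))
          ≤ ∑ k, (t * (α n k * fstar n x / (1 - c n k * fstar n x)) +
              s * (α n k * fstar n y / (1 - c n k * fstar n y))) :=
            Finset.sum_le_sum fun k _ =>
              aux_conv (hα n k) (hc n k) (hfM n x hx k) (hfM n y hy k) ht hs hts
        _ = t * x + s * y := by
            rw [Finset.sum_add_distrib, ← Finset.mul_sum, ← Finset.mul_sum,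
              hinv n x hx, hinv n y hy]
    linarith
  have part1 : ∀ n, StrictMonoOn
      (fun b => (1 - a) * fstar n b + a * Real.log (1 + fstar n b)) (Set.Ici 0) ∧
      ConcaveOn ℝ (Set.Ici 0)
        (fun b => (1 - a) * fstar n b + a * Real.log (1 + fstar n b)) := by
    intro n
    constructor
    · intro x hx y hy hxy
      have hx0 : (0:ℝ) ≤ x := hx
      have hy0 : (0:ℝ) ≤ y := hy
      have hf := hmonoF n x y hx0 hy0 hxy
      have hfx0 := (hrange n x hx0).1
      dsimp only
      have hlog : Real.log (1 + fstar n x) ≤ Real.log (1 + fstar n y) :=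
        Real.log_le_log (by linarith) (by linarith)
      rcases ha0.eq_or_lt with h0 | h0
      · rw [← h0]; simpa using hf
      · have hlog' : Real.log (1 + fstar n x) < Real.log (1 + fstar n y) :=
          Real.log_lt_log (by linarith) (by linarith)
        have h1 : (1 - a) * fstar n x ≤ (1 - a) * fstar n y :=
          mul_le_mul_of_nonneg_left hf.le (by linarith)
        have h2 : a * Real.log (1 + fstar n x) < a * Real.log (1 + fstar n y) :=
          mul_lt_mul_of_pos_left hlog' h0
        linarith
    · refine ⟨convex_Ici 0, ?_⟩
      intro x hx y hy t s ht hs hts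
      have hx0 : (0:ℝ) ≤ x := hx
      have hy0 : (0:ℝ) ≤ y := hy
      have hz0 : 0 ≤ t * x + s * y := add_nonneg (mul_nonneg ht hx0) (mul_nonneg hs hy0)
      have hfx0 := (hrange n x hx0).1
      have hfy0 := (hrange n y hy0).1
      have hf := hconcF n x y t s hx0 hy0 ht hs hts
      simp only [smul_eq_mul]
      have hw0 : 0 ≤ t * fstar n x + s * fstar n y :=
        add_nonneg (mul_nonneg ht hfx0) (mul_nonneg hs hfy0)
      have hlog1 : Real.log (1 + (t * fstar n x + s * fstar n y)) ≤
          Real.log (1 + fstar n (t * x + s * y)) :=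
        Real.log_le_log (by linarith) (by linarith)
      have hlog2 : t * Real.log (1 + fstar n x) + s * Real.log (1 + fstar n y) ≤
          Real.log (t * (1 + fstar n x) + s * (1 + fstar n y)) := by
        have := strictConcaveOn_log_Ioi.concaveOn.2
          (Set.mem_Ioi.2 (by linarith : (0:ℝ) < 1 + fstar n x))
          (Set.mem_Ioi.2 (by linarith : (0:ℝ) < 1 + fstar n y)) ht hs hts
        simpa [smul_eq_mul] using this
      have heq : t * (1 + fstar n x) + s * (1 + fstar n y)
          = 1 + (t * fstar n x + s * fstar n y) := by
        rw [mul_add, mul_add, mul_one, mul_one]; linarith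
      rw [heq] at hlog2
      have hA1 : (1 - a) * (t * fstar n x + s * fstar n y) ≤
          (1 - a) * fstar n (t * x + s * y) :=
        mul_le_mul_of_nonneg_left hf (by linarith)
      have hA2 : a * (t * Real.log (1 + fstar n x) + s * Real.log (1 + fstar n y)) ≤
          a * Real.log (1 + fstar n (t * x + s * y)) :=
        mul_le_mul_of_nonneg_left (hlog2.trans hlog1) ha0
      nlinarith [hA1, hA2]
  refine ⟨part1, ?_⟩
  intro bstar hbpos hbsum ζ hζ hderiv b hb hsum
  have hdiff : ∀ n, DifferentiableAt ℝ
      (fun b => (1 - a) * fstar n b + a * Real.log (1 + fstar n b)) (bstar n) := by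
    intro n
    exact differentiableAt_of_deriv_ne_zero (by rw [hderiv n]; exact hζ.ne')
  have key : ∀ n, (1 - a) * fstar n (b n) + a * Real.log (1 + fstar n (b n)) ≤
      ((1 - a) * fstar n (bstar n) + a * Real.log (1 + fstar n (bstar n))) +
        ζ * (b n - bstar n) := by
    intro n
    rcases lt_trichotomy (b n) (bstar n) with h | h | h
    · have hle := (part1 n).2.deriv_le_slope (Set.mem_Ici.2 (hb n))
        (Set.mem_Ici.2 (hbpos n).le) h (hdiff n)
      rw [hderiv n] at hle
      rw [slope_def_field] at hle
      rw [le_div_iff₀ (by linarith)] at hle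
      linarith
    · rw [h]; simp
    · have hle := (part1 n).2.slope_le_deriv (Set.mem_Ici.2 (hbpos n).le)
        (Set.mem_Ici.2 (hb n)) h (hdiff n)
      rw [hderiv n] at hle
      rw [slope_def_field] at hle
      rw [div_le_iff₀ (by linarith)] at hle
      linarith
  calc ∑ n, ((1 - a) * fstar n (b n) + a * Real.log (1 + fstar n (b n)))
      ≤ ∑ n, (((1 - a) * fstar n (bstar n) + a * Real.log (1 + fstar n (bstar n))) +
          ζ * (b n - bstar n)) := Finset.sum_le_sum fun n _ => key n
    _ = ∑ n, ((1 - a) * fstar n (bstar n) + a * Real.log (1 + fstar n (bstar n))) +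
        ζ * (∑ n, b n - ∑ n, bstar n) := by
        rw [Finset.sum_add_distrib, ← Finset.mul_sum, Finset.sum_sub_distrib]
    _ = _ := by rw [hsum, hbsum]; ring
end

section
/- Fix α ∈ [0, 1] and define g(x) = (1 − α)·f*(x) + α·log(1 + f*(x)) for x ≥ 0. Then g(0) = 0; g is differentiable on (0, ∞); g′ is strictly positive, continuous, and strictly decreasing on (0, ∞). -/
open Set Finset

/-- For `α ∈ [0,1]` and `g(x) = (1−α) f*(x) + α log(1 + f*(x))`: `g(0) = 0`, `g` is
differentiable on `(0,∞)`, and `g′` is strictly positive, continuous, and strictly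
decreasing on `(0,∞)`. -/
theorem stmt_15 {ι : Type*} [Fintype ι] [Nonempty ι] (α c : ι → ℝ)
    (hα : ∀ k, 0 < α k) (hc : ∀ k, 0 < c k)
    (fstar : ℝ → ℝ)
    (hrange : ∀ x : ℝ, 0 ≤ x →
      fstar x ∈ Set.Ico (0 : ℝ) (1 / Finset.univ.sup' Finset.univ_nonempty c))
    (hinv : ∀ x : ℝ, 0 ≤ x → ∑ k, α k * fstar x / (1 - c k * fstar x) = x)
    (hzero : fstar 0 = 0)
    (a : ℝ) (ha0 : 0 ≤ a) (ha1 : a ≤ 1) :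
    (1 - a) * fstar 0 + a * Real.log (1 + fstar 0) = 0 ∧
    DifferentiableOn ℝ
      (fun x => (1 - a) * fstar x + a * Real.log (1 + fstar x)) (Set.Ioi 0) ∧
    (∀ x : ℝ, 0 < x →
      0 < deriv (fun x => (1 - a) * fstar x + a * Real.log (1 + fstar x)) x) ∧
    ContinuousOn
      (deriv (fun x => (1 - a) * fstar x + a * Real.log (1 + fstar x))) (Set.Ioi 0) ∧
    StrictAntiOn
      (deriv (fun x => (1 - a) * fstar x + a * Real.log (1 + fstar x))) (Set.Ioi 0) := by
  set S : ℝ := Finset.univ.sup' Finset.univ_nonempty c with hS_def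
  set M : ℝ := 1 / S with hM_def
  have hS : 0 < S := by
    obtain ⟨k⟩ := ‹Nonempty ι›
    exact lt_of_lt_of_le (hc k) (Finset.le_sup' c (Finset.mem_univ k))
  have hM : 0 < M := by positivity
  have hden : ∀ f : ℝ, 0 ≤ f → f < M → ∀ k, c k * f < 1 := by
    intro f hf0 hfM k
    have h1 : c k * f ≤ S * f :=
      mul_le_mul_of_nonneg_right (Finset.le_sup' c (Finset.mem_univ k)) hf0
    have h2 : S * f < S * M := (mul_lt_mul_iff_right₀ hS).2 hfM
    have h3 : S * M = 1 := by
      rw [hM_def]; field_simp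
    linarith
  set b : ℝ → ℝ := fun f => ∑ k, α k * f / (1 - c k * f) with hb_def
  set B : ℝ → ℝ := fun f => ∑ k, α k / (1 - c k * f) ^ 2 with hB_def
  have hBpos : ∀ f : ℝ, 0 ≤ f → f < M → 0 < B f := by
    intro f h0 h1
    apply Finset.sum_pos _ Finset.univ_nonempty
    intro k _
    have hk : 0 < 1 - c k * f := by linarith [hden f h0 h1 k]
    have hak := hα k
    positivity
  have hbd : ∀ f : ℝ, 0 ≤ f → f < M → HasDerivAt b (B f) f := by
    intro f h0 h1
    simp only [hb_def, hB_def]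
    apply HasDerivAt.fun_sum
    intro k _
    have hk : 0 < 1 - c k * f := by linarith [hden f h0 h1 k]
    have h := ((hasDerivAt_id f).const_mul (α k)).div
      (((hasDerivAt_id f).const_mul (c k)).const_sub 1) hk.ne'
    refine h.congr_deriv ?_
    simp only [id]
    ring
  have hbf : ∀ x : ℝ, 0 ≤ x → b (fstar x) = x := by
    intro x hx; simp only [hb_def]; exact hinv x hx
  have hbmono : StrictMonoOn b (Set.Ico 0 M) := by
    apply strictMonoOn_of_deriv_pos (convex_Ico 0 M)
    · intro x hx
      exact (hbd x hx.1 hx.2).continuousAt.continuousWithinAt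
    · intro x hx
      rw [interior_Ico] at hx
      rw [(hbd x hx.1.le hx.2).deriv]
      exact hBpos x hx.1.le hx.2
  have hb0 : b 0 = 0 := by simp [hb_def]
  have hbnonneg : ∀ f : ℝ, 0 ≤ f → f < M → 0 ≤ b f := by
    intro f h0 h1
    rcases eq_or_lt_of_le h0 with h | h
    · rw [← h, hb0]
    · have := hbmono ⟨le_refl 0, hM⟩ ⟨h0, h1⟩ h
      rw [hb0] at this; exact this.le
  have hfmono : StrictMonoOn fstar (Set.Ici 0) := by
    intro x hx y hy hxy
    by_contra hle
    push_neg at hle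
    have h1 := hrange x hx
    have h2 := hrange y hy
    have hle2 : b (fstar y) ≤ b (fstar x) := hbmono.monotoneOn h2 h1 hle
    rw [hbf x hx, hbf y hy] at hle2
    linarith
  have hsurj : ∀ f : ℝ, 0 ≤ f → f < M → ∃ x : ℝ, 0 ≤ x ∧ fstar x = f := by
    intro f h0 h1
    have hb' := hbnonneg f h0 h1
    refine ⟨b f, hb', ?_⟩
    have heq : b (fstar (b f)) = b f := hbf _ hb'
    exact hbmono.injOn (hrange _ hb') ⟨h0, h1⟩ heq
  have hfpos : ∀ x : ℝ, 0 < x → 0 < fstar x := by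
    intro x hx
    have := hfmono (Set.mem_Ici.2 (le_refl 0)) (Set.mem_Ici.2 hx.le) hx
    rwa [hzero] at this
  have hfcont : ∀ x : ℝ, 0 < x → ContinuousAt fstar x := by
    intro x hx
    apply hfmono.continuousAt_of_image_mem_nhds (Ici_mem_nhds hx)
    have hmem : fstar x ∈ Set.Ioo 0 M := ⟨hfpos x hx, (hrange x hx.le).2⟩
    refine Filter.mem_of_superset (isOpen_Ioo.mem_nhds hmem) ?_
    intro f hf
    obtain ⟨y, hy0, hyf⟩ := hsurj f hf.1.le hf.2
    exact ⟨y, hy0, hyf⟩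
  have hfd : ∀ x : ℝ, 0 < x → HasDerivAt fstar (B (fstar x))⁻¹ x := by
    intro x hx
    have hm := hrange x hx.le
    refine HasDerivAt.of_local_left_inverse (hfcont x hx) (hbd _ hm.1 hm.2)
      (hBpos _ hm.1 hm.2).ne' ?_
    filter_upwards [isOpen_Ioi.mem_nhds hx] with y hy
    exact hbf y (le_of_lt hy)
  set D : ℝ → ℝ := fun x =>
    (1 - a) * (B (fstar x))⁻¹ + a * ((1 + fstar x)⁻¹ * (B (fstar x))⁻¹) with hD_def
  have hgd : ∀ x : ℝ, 0 < x →
      HasDerivAt (fun x => (1 - a) * fstar x + a * Real.log (1 + fstar x)) (D x) x := by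
    intro x hx
    have hf := hfd x hx
    have h1f : (0:ℝ) < 1 + fstar x := by linarith [(hrange x hx.le).1]
    have hlog : HasDerivAt (fun y => Real.log (1 + fstar y))
        ((1 + fstar x)⁻¹ * (B (fstar x))⁻¹) x := by
      have := (Real.hasDerivAt_log h1f.ne').comp x (hf.const_add 1)
      simpa [Function.comp_def] using this
    simp only [hD_def]
    exact (hf.const_mul (1 - a)).add (hlog.const_mul a)
  have hN2 : ∀ t : ℝ, 0 < t → t ≤ 1 → 0 < (1 - a) + a * t := by
    intro t ht0 ht1
    nlinarith
  have hDpos : ∀ x : ℝ, 0 < x → 0 < D x := by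
    intro x hx
    have hm := hrange x hx.le
    have hB := hBpos _ hm.1 hm.2
    have h1f : (0:ℝ) < 1 + fstar x := by linarith [hm.1]
    have hi : (0:ℝ) < (1 + fstar x)⁻¹ := by positivity
    have hi1 : (1 + fstar x)⁻¹ ≤ 1 := inv_le_one_of_one_le₀ (by linarith [hm.1])
    have hBi : 0 < (B (fstar x))⁻¹ := by positivity
    have hN := hN2 _ hi hi1
    simp only [hD_def]
    nlinarith [mul_pos hN hBi]
  have hDcont : ContinuousOn D (Set.Ioi 0) := by
    intro x hx
    rw [Set.mem_Ioi] at hx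
    apply ContinuousAt.continuousWithinAt
    have hm := hrange x hx.le
    have hcf := hfcont x hx
    have hBc : ContinuousAt (fun y => B (fstar y)) x := by
      have h1 : ContinuousAt B (fstar x) := by
        simp only [hB_def]
        apply tendsto_finset_sum
        intro k _
        have hk : 0 < 1 - c k * fstar x := by linarith [hden _ hm.1 hm.2 k]
        exact ContinuousAt.div continuousAt_const
          (((continuousAt_const.sub (continuousAt_const.mul continuousAt_id)).pow 2))
          (by positivity)
      exact h1.comp hcf
    have hBne : B (fstar x) ≠ 0 := (hBpos _ hm.1 hm.2).ne'
    have h1f : (1 + fstar x) ≠ 0 := by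
      have : (0:ℝ) < 1 + fstar x := by linarith [hm.1]
      exact this.ne'
    simp only [hD_def]
    exact (continuousAt_const.mul (hBc.inv₀ hBne)).add
      (continuousAt_const.mul
        (((continuousAt_const.add hcf).inv₀ h1f).mul (hBc.inv₀ hBne)))
  have hDanti : StrictAntiOn D (Set.Ioi 0) := by
    intro x hx y hy hxy
    rw [Set.mem_Ioi] at hx hy
    have hmx := hrange x hx.le
    have hmy := hrange y hy.le
    have hff : fstar x < fstar y := hfmono hx.le hy.le hxy
    have hBlt : B (fstar x) < B (fstar y) := by
      simp only [hB_def]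
      apply Finset.sum_lt_sum_of_nonempty Finset.univ_nonempty
      intro k _
      have h1 : 0 < 1 - c k * fstar y := by linarith [hden _ hmy.1 hmy.2 k]
      have h2 : 1 - c k * fstar y < 1 - c k * fstar x := by nlinarith [hc k]
      have hsq : (1 - c k * fstar y) ^ 2 < (1 - c k * fstar x) ^ 2 := by nlinarith
      exact div_lt_div_of_pos_left (hα k) (by positivity) hsq
    have hB1 := hBpos _ hmx.1 hmx.2
    have hB2 := hBpos _ hmy.1 hmy.2
    have hvu : (B (fstar y))⁻¹ < (B (fstar x))⁻¹ := inv_strictAnti₀ hB1 hBlt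
    have h1fx : (0:ℝ) < 1 + fstar x := by linarith [hmx.1]
    have h1fy : (0:ℝ) < 1 + fstar y := by linarith [hmy.1]
    have hIle : (1 + fstar y)⁻¹ ≤ (1 + fstar x)⁻¹ := inv_anti₀ h1fx (by linarith)
    have hI2 : (0:ℝ) < (1 + fstar y)⁻¹ := by positivity
    have hI21 : (1 + fstar y)⁻¹ ≤ 1 := inv_le_one_of_one_le₀ (by linarith [hmy.1])
    have hN := hN2 _ hI2 hI21
    have hu : (0:ℝ) < (B (fstar x))⁻¹ := by positivity
    simp only [hD_def]
    nlinarith [mul_lt_mul_of_pos_left hvu hN,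
      mul_nonneg (mul_nonneg ha0 (sub_nonneg.2 hIle)) hu.le]
  refine ⟨?_, ?_, ?_, ?_, ?_⟩
  · rw [hzero]; simp
  · intro x hx
    exact (hgd x hx).differentiableAt.differentiableWithinAt
  · intro x hx
    rw [(hgd x hx).deriv]
    exact hDpos x hx
  · exact hDcont.congr fun x hx => (hgd x hx).deriv
  · intro x hx y hy hxy
    rw [(hgd x hx).deriv, (hgd y hy).deriv]
    exact hDanti hx hy hxy
end

section
/- The inverse f* of b satisfies f*(x) < 1/max_{k∈K} c_k for every x ≥ 0, f*(x) → 1/max_{k∈K} c_k as x → ∞, and (f*)′(x) → 0 as x → ∞. -/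
open Filter Set Topology

/-- The inverse `f*` of `b` satisfies `f*(x) < 1/max_k c_k` for all `x ≥ 0`,
`f*(x) → 1/max_k c_k` as `x → ∞`, and `(f*)′(x) → 0` as `x → ∞`. -/
theorem stmt_17 {ι : Type*} [Fintype ι] [Nonempty ι] (α c : ι → ℝ)
    (hα : ∀ k, 0 < α k) (hc : ∀ k, 0 < c k)
    (fstar : ℝ → ℝ)
    (hrange : ∀ x : ℝ, 0 ≤ x →
      fstar x ∈ Set.Ico (0 : ℝ) (1 / Finset.univ.sup' Finset.univ_nonempty c))
    (hinv : ∀ x : ℝ, 0 ≤ x → ∑ k, α k * fstar x / (1 - c k * fstar x) = x) :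
    (∀ x : ℝ, 0 ≤ x → fstar x < 1 / Finset.univ.sup' Finset.univ_nonempty c) ∧
    Filter.Tendsto fstar Filter.atTop
      (nhds (1 / Finset.univ.sup' Finset.univ_nonempty c)) ∧
    Filter.Tendsto (deriv fstar) Filter.atTop (nhds 0) := by
  set M := Finset.univ.sup' Finset.univ_nonempty c with hMdef
  obtain ⟨k0, -, hk0⟩ := Finset.exists_mem_eq_sup' Finset.univ_nonempty c
  have hcM : ∀ k, c k ≤ M := fun k => Finset.le_sup' c (Finset.mem_univ k)
  have hM : 0 < M := lt_of_lt_of_le (hc k0) (hcM k0)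
  set b : ℝ → ℝ := fun f => ∑ k, α k * f / (1 - c k * f) with hbdef
  have hpos : ∀ f ∈ Set.Ico (0:ℝ) (1/M), ∀ k, 0 < 1 - c k * f := by
    intro f hf k
    have h1 : c k * f ≤ M * f := mul_le_mul_of_nonneg_right (hcM k) hf.1
    have h2 : M * f < 1 := by
      have := (lt_div_iff₀ hM).mp hf.2
      linarith [mul_comm M f]
    linarith
  have bmono : StrictMonoOn b (Set.Ico 0 (1/M)) := by
    intro f hf g hg hfg
    apply Finset.sum_lt_sum_of_nonempty Finset.univ_nonempty
    intro k _
    rw [div_lt_div_iff₀ (hpos f hf k) (hpos g hg k)]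
    nlinarith [hα k, hc k, hf.1]
  have hbf : ∀ x : ℝ, 0 ≤ x → b (fstar x) = x := hinv
  set D : ℝ → ℝ := fun f => ∑ k, α k / (1 - c k * f)^2 with hDdef
  -- tendsto fstar
  have htend : Tendsto fstar atTop (𝓝 (1/M)) := by
    rw [tendsto_order]
    constructor
    · intro a ha
      rcases lt_or_ge a 0 with h|h
      · filter_upwards [eventually_ge_atTop 0] with x hx
        exact h.trans_le (hrange x hx).1
      · have haI : a ∈ Set.Ico (0:ℝ) (1/M) := ⟨h, ha⟩
        filter_upwards [eventually_gt_atTop (max (b a) 0)] with x hx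
        have hx0 : (0:ℝ) ≤ x := le_of_lt (lt_of_le_of_lt (le_max_right _ _) hx)
        by_contra hcon
        push_neg at hcon
        have : b (fstar x) ≤ b a := bmono.monotoneOn (hrange x hx0) haI hcon
        rw [hbf x hx0] at this
        exact absurd this (not_le.mpr (lt_of_le_of_lt (le_max_left _ _) hx))
    · intro a ha
      filter_upwards [eventually_ge_atTop 0] with x hx
      exact (hrange x hx).2.trans ha
  -- continuity
  have hcont : ∀ x : ℝ, 0 < x → ContinuousAt fstar x := by
    intro x hx
    rw [ContinuousAt, tendsto_order]
    constructor
    · intro a ha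
      rcases lt_or_ge a 0 with h|h
      · filter_upwards [Ioi_mem_nhds hx] with y hy
        exact h.trans_le (hrange y (le_of_lt hy)).1
      · have haI : a ∈ Set.Ico (0:ℝ) (1/M) := ⟨h, ha.trans (hrange x hx.le).2⟩
        have hba : b a < x := by
          rw [← hbf x hx.le]
          exact bmono haI (hrange x hx.le) ha
        filter_upwards [Ioi_mem_nhds hba] with y hy
        have hba0 : 0 ≤ b a := by
          apply Finset.sum_nonneg
          intro k _
          exact div_nonneg (mul_nonneg (hα k).le haI.1) (hpos a haI k).le
        have hy0 : (0:ℝ) ≤ y := le_trans hba0 (le_of_lt hy)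
        refine (bmono.lt_iff_lt haI (hrange y hy0)).mp ?_
        rw [hbf y hy0]; exact hy
    · intro a ha
      rcases le_or_gt (1/M) a with h|h
      · filter_upwards [Ioi_mem_nhds hx] with y hy
        exact lt_of_lt_of_le (hrange y hy.le).2 h
      · have haI : a ∈ Set.Ico (0:ℝ) (1/M) := ⟨le_trans (hrange x hx.le).1 ha.le, h⟩
        have hxa : x < b a := by
          rw [← hbf x hx.le]
          exact bmono (hrange x hx.le) haI ha
        filter_upwards [Ioo_mem_nhds hx hxa] with y hy
        refine (bmono.lt_iff_lt (hrange y hy.1.le) haI).mp ?_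
        rw [hbf y hy.1.le]; exact hy.2
  -- derivative of b
  have hb' : ∀ f ∈ Set.Ico (0:ℝ) (1/M), HasDerivAt b (D f) f := by
    intro f hf
    apply HasDerivAt.fun_sum
    intro k _
    have h1 : HasDerivAt (fun f : ℝ => α k * f) (α k) f := by
      simpa using (hasDerivAt_id f).const_mul (α k)
    have h2 : HasDerivAt (fun f : ℝ => 1 - c k * f) (-c k) f := by
      simpa using ((hasDerivAt_id f).const_mul (c k)).const_sub 1
    have := h1.fun_div h2 (ne_of_gt (hpos f hf k))
    convert this using 1
    have h3 := (hpos f hf k).ne'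
    · rfl
    ring
  have hDpos : ∀ f ∈ Set.Ico (0:ℝ) (1/M), 0 < D f := by
    intro f hf
    apply Finset.sum_pos _ Finset.univ_nonempty
    intro k _
    exact div_pos (hα k) (pow_pos (hpos f hf k) 2)
  have hfder : ∀ x : ℝ, 0 < x → HasDerivAt fstar (D (fstar x))⁻¹ x := by
    intro x hx
    exact HasDerivAt.of_local_left_inverse (hcont x hx) (hb' _ (hrange x hx.le))
      (ne_of_gt (hDpos _ (hrange x hx.le)))
      (by filter_upwards [Ioi_mem_nhds hx] with y hy; exact hinv y hy.le)
  -- tendsto of D ∘ fstar to atTop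
  have h1Mpos : ∀ x : ℝ, 0 ≤ x → 0 < 1 - M * fstar x := by
    intro x hx
    have := (hrange x hx).2
    have := (lt_div_iff₀ hM).mp this
    linarith [mul_comm M (fstar x)]
  have h1M : Tendsto (fun x => 1 - M * fstar x) atTop (𝓝 0) := by
    have h : Tendsto (fun x => 1 - M * fstar x) atTop (𝓝 (1 - M * (1/M))) :=
      tendsto_const_nhds.sub (htend.const_mul M)
    have he : 1 - M * (1/M) = 0 := by field_simp; ring
    rwa [he] at h
  have hsq : Tendsto (fun x => ((1 - M * fstar x)^2)⁻¹) atTop atTop := by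
    apply tendsto_inv_nhdsGT_zero.comp
    apply tendsto_nhdsWithin_of_tendsto_nhds_of_eventually_within
    · simpa using h1M.pow 2
    · filter_upwards [eventually_ge_atTop 0] with x hx
      exact pow_pos (h1Mpos x hx) 2
  have hbig : Tendsto (fun x => D (fstar x)) atTop atTop := by
    apply tendsto_atTop_mono' _ _ (hsq.const_mul_atTop (hα k0))
    filter_upwards [eventually_ge_atTop 0] with x hx
    have hsingle : α k0 / (1 - c k0 * fstar x)^2 ≤ D (fstar x) := by
      apply Finset.single_le_sum _ (Finset.mem_univ k0)
      intro k _
      exact (div_pos (hα k) (pow_pos (hpos _ (hrange x hx) k) 2)).le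
    calc α k0 * ((1 - M * fstar x)^2)⁻¹
        = α k0 / (1 - c k0 * fstar x)^2 := by rw [← hk0]; ring
      _ ≤ D (fstar x) := hsingle
  refine ⟨fun x hx => (hrange x hx).2, htend, ?_⟩
  refine Tendsto.congr' ?_ hbig.inv_tendsto_atTop
  filter_upwards [eventually_gt_atTop 0] with x hx
  exact ((hfder x hx).deriv).symm
end
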